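/- arXiv:1011.1790 — 2 statements merged into one kernel-verified Lean document; each statement's English description precedes it below -/
import Mathlib

section
/- As real ζ → +∞ avoiding the points where sin(π(ζ−α)) = 0, B(α − ζ, γ) = Γ(γ)·(sin(π(ζ−α−γ))/sin(π(ζ−α)))·ζ^{−γ}·[1 + γ(2α+γ−1)/(2ζ) + O(ζ^{−2})], uniformly as long as |sin(π(ζ−α))| is bounded away from 0. -/
open Real Complex Filter Asymptotics

open MeasureTheory Set

lemma laplace_eval {d : ℂ} (hd : 0 < d.re) {x : ℝ} (hx : 0 < x) :
    ∫ s in Ioi (0:ℝ), (s:ℂ) ^ (d - 1) * Complex.exp (-((x:ℂ) * s)) =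
      Complex.Gamma d * (x:ℂ) ^ (-d) := by
  have h := integral_cpow_mul_exp_neg_mul_Ioi hd hx
  rw [show (∫ s in Ioi (0:ℝ), (s:ℂ) ^ (d - 1) * Complex.exp (-((x:ℂ) * s)))
      = ∫ t in Ioi (0:ℝ), (t:ℂ) ^ (d - 1) * Complex.exp (-(x * t)) by
    refine setIntegral_congr_fun measurableSet_Ioi fun t ht => ?_
    push_cast; ring_nf, h]
  rw [mul_comm]
  congr 1
  rw [one_div, Complex.cpow_neg,
    Complex.inv_cpow _ _ (by rw [Complex.arg_ofReal_of_nonneg hx.le]; exact Real.pi_ne_zero.symm)]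

lemma laplace_integrable {d : ℂ} (hd : 0 < d.re) {x : ℝ} (hx : 0 < x) :
    IntegrableOn (fun s : ℝ => (s:ℂ) ^ (d - 1) * Complex.exp (-((x:ℂ) * s))) (Ioi 0) := by
  have h := Complex.GammaIntegral_convergent hd
  rw [← mul_zero x, ← integrableOn_Ioi_comp_mul_left_iff _ _ hx] at h
  refine MeasureTheory.IntegrableOn.congr_fun (h.const_mul (((x:ℂ)^(d-1))⁻¹)) (fun s hs => ?_) measurableSet_Ioi
  simp only [mem_Ioi] at hs
  have hxne : ((x:ℂ))^(d-1) ≠ 0 := by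
    simp [Complex.cpow_eq_zero_iff, Complex.ofReal_ne_zero.mpr hx.ne']
  rw [Complex.ofReal_mul, mul_cpow_ofReal_nonneg hx.le hs.le, Complex.ofReal_exp]
  push_cast
  field_simp

lemma rpow_exp_integrable {p : ℝ} (hp : -1 < p) {r : ℝ} (hr : 0 < r) :
    IntegrableOn (fun s : ℝ => s ^ p * Real.exp (-(r * s))) (Ioi 0) := by
  have h := Real.GammaIntegral_convergent (by linarith : 0 < p + 1)
  rw [← mul_zero r, ← integrableOn_Ioi_comp_mul_left_iff _ _ hr] at h
  refine MeasureTheory.IntegrableOn.congr_fun (h.const_mul ((r ^ p)⁻¹)) (fun s hs => ?_) measurableSet_Ioi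
  simp only [mem_Ioi] at hs
  rw [add_sub_cancel_right, Real.mul_rpow hr.le hs.le]
  field_simp [(Real.rpow_pos_of_pos hr p).ne']
lemma expNegDeriv : ∀ s ∈ Ioi (0:ℝ), HasDerivWithinAt (fun s:ℝ => rexp (-s)) (-rexp (-s)) (Ioi 0) s := by
  intro s _
  have h := ((hasDerivAt_neg' s).exp).hasDerivWithinAt (s := Ioi 0)
  simpa using h

lemma expNegInj : InjOn (fun s:ℝ => rexp (-s)) (Ioi 0) :=
  fun _ _ _ _ h => neg_injective (Real.exp_injective h)

lemma expNegImage : (fun s:ℝ => rexp (-s)) '' (Ioi 0) = Ioo 0 1 := by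
  ext t
  constructor
  · rintro ⟨s, hs, rfl⟩
    exact ⟨Real.exp_pos _, Real.exp_lt_one_iff.mpr (by simpa using hs)⟩
  · rintro ⟨h0, h1⟩
    exact ⟨-Real.log t, by simpa using Real.log_neg h0 h1, by simp [Real.exp_log h0]⟩

lemma cexp_cpow (s : ℝ) (w : ℂ) : Complex.exp (-(s:ℂ)) ^ w = Complex.exp (-w * s) := by
  rw [Complex.cpow_def_of_ne_zero (Complex.exp_ne_zero _),
    Complex.log_exp (by simpa using Real.pi_pos) (by simpa using Real.pi_nonneg)]
  ring_nf

lemma integrand_eq (u c : ℂ) (s : ℝ) :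
    |(-rexp (-s))| • (((rexp (-s) : ℝ):ℂ) ^ (u - 1) * (1 - ((rexp (-s):ℝ):ℂ)) ^ (c - 1))
      = Complex.exp (-u * s) * ((1 - Real.exp (-s) : ℝ) : ℂ) ^ (c - 1) := by
  have h1 : ((rexp (-s) : ℝ) : ℂ) = Complex.exp (-(s:ℂ)) := by
    rw [Complex.ofReal_exp]; norm_num
  have h2 : ((1:ℂ) - ((rexp (-s):ℝ):ℂ)) = ((1 - Real.exp (-s) : ℝ) : ℂ) := by push_cast; ring
  rw [abs_neg, abs_of_pos (Real.exp_pos _), real_smul, h2, h1, cexp_cpow,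
    ← mul_assoc, ← Complex.exp_add]
  congr 2
  ring

lemma beta_subst (u c : ℂ) :
    Complex.betaIntegral u c =
      ∫ s in Ioi (0:ℝ), Complex.exp (-u * s) * ((1 - Real.exp (-s) : ℝ) : ℂ) ^ (c - 1) := by
  rw [Complex.betaIntegral, intervalIntegral.integral_of_le zero_le_one,
    integral_Ioc_eq_integral_Ioo, ← expNegImage,
    integral_image_eq_integral_abs_deriv_smul measurableSet_Ioi expNegDeriv expNegInj]
  exact setIntegral_congr_fun measurableSet_Ioi fun s _ => integrand_eq u c s

lemma beta_integrand_integrable {u c : ℂ} (hu : 0 < u.re) (hc : 0 < c.re) :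
    IntegrableOn (fun s : ℝ => Complex.exp (-u * s) * ((1 - Real.exp (-s) : ℝ) : ℂ) ^ (c - 1)) (Ioi 0) := by
  have h := ((Complex.betaIntegral_convergent hu hc).1).mono_set Ioo_subset_Ioc_self
  rw [← expNegImage, integrableOn_image_iff_integrableOn_abs_deriv_smul measurableSet_Ioi expNegDeriv expNegInj] at h
  exact MeasureTheory.IntegrableOn.congr_fun h (fun s _ => integrand_eq u c s) measurableSet_Ioi

noncomputable def uu (s : ℝ) : ℝ := (1 - rexp (-s)) / s

lemma uu_le_one {s : ℝ} (hs : 0 < s) : uu s ≤ 1 := by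
  rw [uu, div_le_one hs]
  nlinarith [Real.add_one_le_exp (-s), Real.exp_pos (-s)]

lemma exp_le_uu {s : ℝ} (hs : 0 < s) : rexp (-s) ≤ uu s := by
  rw [uu, le_div_iff₀ hs]
  have h := Real.add_one_le_exp s
  have h2 : rexp (-s) * rexp s = 1 := by rw [← Real.exp_add]; simp
  nlinarith [Real.exp_pos (-s), Real.exp_pos s]

lemma uu_pos {s : ℝ} (hs : 0 < s) : 0 < uu s := lt_of_lt_of_le (Real.exp_pos _) (exp_le_uu hs)

lemma uu_taylor {s : ℝ} (hs : 0 < s) (hs1 : s ≤ 1) : |uu s - (1 - s/2)| ≤ s^2 := by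
  have hb := Real.exp_bound (x := -s) (by rw [abs_neg, abs_of_pos hs]; exact hs1) (n := 3) (by norm_num)
  rw [show |(-s)| = s by rw [abs_neg, abs_of_pos hs]] at hb
  norm_num [Nat.factorial] at hb
  have hsum : (∑ i ∈ Finset.range 3, (-s) ^ i / (i.factorial : ℝ)) = 1 - s + s^2/2 := by
    simp [Finset.sum_range_succ, Nat.factorial]; ring
  rw [hsum] at hb
  have : uu s - (1 - s/2) = (rexp (-s) - (1 - s + s^2/2)) / (-s) := by
    rw [uu]; field_simp; ring
  rw [this, abs_div, abs_neg, abs_of_pos hs, div_le_iff₀ hs]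
  calc |rexp (-s) - (1 - s + s^2/2)| ≤ s^3 * (2/9) := hb
    _ ≤ s^2 * s := by nlinarith

lemma log_uu_taylor {s : ℝ} (hs : 0 < s) (hs1 : s ≤ 1) : |Real.log (uu s) + s/2| ≤ 4 * s^2 := by
  set x : ℝ := 1 - uu s with hx
  have hx0 : 0 ≤ x := by simp [hx]; linarith [uu_le_one hs]
  have hxs : x ≤ s := by
    have hes : 1 - s ≤ rexp (-s) := by nlinarith [Real.add_one_le_exp (-s)]
    have := exp_le_uu hs
    simp only [hx]; linarith
  have hu3 : (1:ℝ)/3 ≤ uu s := by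
    have h1 : rexp (-1) ≤ rexp (-s) := Real.exp_le_exp.mpr (by linarith)
    have h3 : rexp 1 ≤ 3 := by have := Real.exp_one_lt_d9; linarith
    have h2 : (3:ℝ)⁻¹ ≤ (rexp 1)⁻¹ := by
      apply inv_anti₀ (Real.exp_pos 1) h3
    have := exp_le_uu hs
    rw [Real.exp_neg] at h1
    have : (1:ℝ)/3 = (3:ℝ)⁻¹ := by norm_num
    linarith [exp_le_uu hs]
  have hxabs : |x| = x := _root_.abs_of_nonneg hx0
  have hx1 : |x| < 1 := by rw [hxabs]; simp only [hx]; linarith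
  have hlog := Real.abs_log_sub_add_sum_range_le hx1 1
  simp [Finset.sum_range_succ] at hlog
  have h1mx : 1 - x = uu s := by simp [hx]
  rw [h1mx] at hlog
  have hxx : (1:ℝ)/3 ≤ 1 - |x| := by rw [hxabs]; simp only [hx]; linarith
  have hlog2 : |x + Real.log (uu s)| ≤ 3 * x^2 := by
    calc |x + Real.log (uu s)| ≤ x^2 / (1 - |x|) := hlog
      _ ≤ x^2 / (1/3) := div_le_div_of_nonneg_left (by positivity) (by norm_num) hxx
      _ = 3 * x^2 := by ring
  have hxt : |s/2 - x| ≤ s^2 := by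
    have h := uu_taylor hs hs1
    rw [show s/2 - x = uu s - (1 - s/2) by simp only [hx]; ring]
    exact h
  calc |Real.log (uu s) + s/2| = |(x + Real.log (uu s)) + (s/2 - x)| := by congr 1; ring
    _ ≤ |x + Real.log (uu s)| + |s/2 - x| := abs_add_le _ _
    _ ≤ 3 * x^2 + s^2 := add_le_add hlog2 hxt
    _ ≤ 4 * s^2 := by nlinarith

noncomputable def phi (a c : ℂ) (s : ℝ) : ℂ :=
  Complex.exp (-a * s) * ((uu s : ℝ) : ℂ) ^ (c - 1)

lemma phi_eq_exp (a c : ℂ) {s : ℝ} (hs : 0 < s) :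
    phi a c s = Complex.exp (-a * s + (c - 1) * (Real.log (uu s) : ℝ)) := by
  rw [phi, Complex.exp_add]
  congr 1
  rw [Complex.cpow_def_of_ne_zero (by exact_mod_cast (uu_pos hs).ne'),
    Complex.ofReal_log (uu_pos hs).le]
  rw [mul_comm]

lemma norm_phi_le (a c : ℂ) {s : ℝ} (hs : 0 < s) :
    ‖phi a c s‖ ≤ rexp ((|a.re| + |c.re - 1|) * s) := by
  rw [phi, norm_mul, Complex.norm_exp,
    Complex.norm_cpow_eq_rpow_re_of_pos (uu_pos hs)]
  have h1 : ((-a * s : ℂ)).re = -a.re * s := by simp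
  rw [h1]
  have h2 : (uu s) ^ ((c-1).re) ≤ rexp (|c.re - 1| * s) := by
    have hcre : (c - 1).re = c.re - 1 := by simp
    rw [hcre]
    rcases le_or_gt 0 (c.re - 1) with h | h
    · calc (uu s) ^ (c.re - 1) ≤ 1 ^ (c.re - 1) :=
            Real.rpow_le_rpow (uu_pos hs).le (uu_le_one hs) h
        _ = 1 := Real.one_rpow _
        _ ≤ rexp (|c.re - 1| * s) := Real.one_le_exp (by positivity)
    · calc (uu s) ^ (c.re - 1) ≤ (rexp (-s)) ^ (c.re - 1) := by
            apply Real.rpow_le_rpow_of_nonpos (Real.exp_pos _) (exp_le_uu hs) h.le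
        _ = rexp (-s * (c.re - 1)) := by
            rw [← Real.exp_mul]
        _ ≤ rexp (|c.re - 1| * s) := by
            apply Real.exp_le_exp.mpr
            rw [abs_of_neg h]; nlinarith
  calc rexp (-a.re * s) * (uu s) ^ ((c-1).re) ≤ rexp (|a.re| * s) * rexp (|c.re-1| * s) := by
        apply mul_le_mul _ h2 (Real.rpow_nonneg (uu_pos hs).le _) (Real.exp_pos _).le
        apply Real.exp_le_exp.mpr
        nlinarith [abs_nonneg a.re, neg_abs_le a.re, le_abs_self a.re]
    _ = rexp ((|a.re| + |c.re - 1|) * s) := by rw [← Real.exp_add]; ring_nf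

lemma phi_taylor_bound (a c : ℂ) : ∃ C K : ℝ, 0 ≤ K ∧ ∀ s : ℝ, 0 < s →
    ‖phi a c s - 1 - (-a - (c-1)/2) * s‖ ≤ C * (s^2 * rexp (K * s)) := by
  set M : ℝ := ‖a‖ + 5 * ‖c - 1‖ with hM
  have hM0 : 0 ≤ M := by positivity
  set s₀ : ℝ := 1 / (M + 1) with hs₀
  have hs₀pos : 0 < s₀ := by positivity
  have hs₀le : s₀ ≤ 1 := by
    rw [hs₀, div_le_one (by linarith)]; linarith
  set q : ℂ := -a - (c - 1)/2 with hq
  set K₁ : ℝ := |a.re| + |c.re - 1| with hK₁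
  have hK₁0 : 0 ≤ K₁ := by positivity
  refine ⟨max (M^2 + 4 * ‖c-1‖) ((2 + ‖q‖)/s₀^2), K₁ + 1, by positivity, fun s hs => ?_⟩
  have hexp1 : (1:ℝ) ≤ rexp ((K₁ + 1) * s) := Real.one_le_exp (by positivity)
  rcases le_or_gt s s₀ with hcase | hcase
  · -- small s
    have hs1 : s ≤ 1 := le_trans hcase hs₀le
    set L : ℝ := Real.log (uu s) with hL
    have hLb : |L + s/2| ≤ 4 * s^2 := log_uu_taylor hs hs1
    have hLabs : |L| ≤ 5 * s := by
      have h' : |L| ≤ |L + s/2| + |s/2| := by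
        have := abs_add_le (L + s/2) (-(s/2))
        simpa using this
      rw [abs_of_pos (by linarith : (0:ℝ) < s/2)] at h'
      nlinarith
    set g : ℂ := -a * s + (c - 1) * (L : ℂ) with hg
    have hgq : ‖g - q * s‖ ≤ 4 * ‖c - 1‖ * s^2 := by
      have : g - q * s = (c - 1) * ((L + s/2 : ℝ) : ℂ) := by
        rw [hg, hq]; push_cast; ring
      rw [this, norm_mul, Complex.norm_real, Real.norm_eq_abs]
      calc ‖c - 1‖ * |L + s/2| ≤ ‖c - 1‖ * (4 * s^2) :=
            mul_le_mul_of_nonneg_left hLb (norm_nonneg _)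
        _ = 4 * ‖c - 1‖ * s^2 := by ring
    have hgM : ‖g‖ ≤ M * s := by
      calc ‖g‖ ≤ ‖-a * s‖ + ‖(c-1) * (L:ℂ)‖ := norm_add_le _ _
        _ = ‖a‖ * s + ‖c-1‖ * |L| := by
            rw [norm_mul, norm_mul, norm_neg, Complex.norm_real, Real.norm_eq_abs,
              Complex.norm_real, Real.norm_eq_abs, abs_of_pos hs]
        _ ≤ ‖a‖ * s + ‖c-1‖ * (5 * s) := by
            have := mul_le_mul_of_nonneg_left hLabs (norm_nonneg (c-1))
            linarith
        _ = M * s := by rw [hM]; ring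
    have hg1 : ‖g‖ ≤ 1 := by
      calc ‖g‖ ≤ M * s := hgM
        _ ≤ M * s₀ := by nlinarith
        _ = M / (M + 1) := by rw [hs₀]; ring
        _ ≤ 1 := by rw [div_le_one (by linarith)]; linarith
    have hexpg : ‖Complex.exp g - 1 - g‖ ≤ ‖g‖^2 := by
      have := Complex.norm_exp_sub_one_sub_id_le (x := g) hg1
      simpa using this
    have key : ‖phi a c s - 1 - q * s‖ ≤ (M^2 + 4 * ‖c-1‖) * s^2 := by
      have hphi : phi a c s = Complex.exp g := phi_eq_exp a c hs
      calc ‖phi a c s - 1 - q * s‖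
          = ‖(Complex.exp g - 1 - g) + (g - q * s)‖ := by rw [hphi]; congr 1; ring
        _ ≤ ‖Complex.exp g - 1 - g‖ + ‖g - q * s‖ := norm_add_le _ _
        _ ≤ ‖g‖^2 + 4 * ‖c-1‖ * s^2 := by linarith
        _ ≤ (M*s)^2 + 4 * ‖c-1‖ * s^2 := by nlinarith [norm_nonneg g]
        _ = (M^2 + 4 * ‖c-1‖) * s^2 := by ring
    calc ‖phi a c s - 1 - q * s‖ ≤ (M^2 + 4 * ‖c-1‖) * s^2 := key
      _ ≤ max (M^2 + 4 * ‖c-1‖) ((2 + ‖q‖)/s₀^2) * s^2 := by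
          apply mul_le_mul_of_nonneg_right (le_max_left _ _) (sq_nonneg s)
      _ ≤ max (M^2 + 4 * ‖c-1‖) ((2 + ‖q‖)/s₀^2) * (s^2 * rexp ((K₁+1) * s)) := by
          have hB : (0:ℝ) ≤ max (M^2 + 4 * ‖c-1‖) ((2 + ‖q‖)/s₀^2) := by
            refine le_trans ?_ (le_max_left _ _); positivity
          have : s^2 ≤ s^2 * rexp ((K₁+1) * s) := by nlinarith [sq_nonneg s]
          exact mul_le_mul_of_nonneg_left this hB
  · -- large s
    have hbig : ‖phi a c s - 1 - q * s‖ ≤ (2 + ‖q‖) * rexp ((K₁ + 1) * s) := by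
      have h1 : ‖phi a c s‖ ≤ rexp (K₁ * s) := norm_phi_le a c hs
      have h2 : ‖phi a c s - 1 - q * s‖ ≤ ‖phi a c s‖ + 1 + ‖q‖ * s := by
        calc ‖phi a c s - 1 - q * s‖ ≤ ‖phi a c s - 1‖ + ‖q * s‖ := norm_sub_le _ _
          _ ≤ ‖phi a c s‖ + ‖(1:ℂ)‖ + ‖q‖ * ‖(s:ℂ)‖ := by
              have := norm_sub_le (phi a c s) 1
              rw [norm_mul]
              linarith
          _ = ‖phi a c s‖ + 1 + ‖q‖ * s := by
              rw [norm_one, Complex.norm_real, Real.norm_eq_abs, abs_of_pos hs]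
      have hse : s ≤ rexp s := by nlinarith [Real.add_one_le_exp s]
      have e1 : rexp (K₁ * s) ≤ rexp ((K₁ + 1) * s) := Real.exp_le_exp.mpr (by nlinarith)
      have e2 : rexp s ≤ rexp ((K₁ + 1) * s) := Real.exp_le_exp.mpr (by nlinarith)
      have e3 : ‖q‖ * s ≤ ‖q‖ * rexp ((K₁ + 1) * s) := by
        apply mul_le_mul_of_nonneg_left (le_trans hse e2) (norm_nonneg q)
      calc ‖phi a c s - 1 - q * s‖ ≤ ‖phi a c s‖ + 1 + ‖q‖ * s := h2
        _ ≤ rexp ((K₁+1)*s) + rexp ((K₁+1)*s) + ‖q‖ * rexp ((K₁+1)*s) := by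
            have := le_trans h1 e1
            linarith
        _ = (2 + ‖q‖) * rexp ((K₁ + 1) * s) := by ring
    have hs2 : s₀^2 ≤ s^2 := by nlinarith
    calc ‖phi a c s - 1 - q * s‖ ≤ (2 + ‖q‖) * rexp ((K₁ + 1) * s) := hbig
      _ ≤ ((2 + ‖q‖)/s₀^2) * (s^2 * rexp ((K₁+1) * s)) := by
          rw [div_mul_eq_mul_div, le_div_iff₀ (by positivity)]
          have hq0 : (0:ℝ) ≤ 2 + ‖q‖ := by positivity
          nlinarith [Real.exp_pos ((K₁+1)*s),
            mul_le_mul_of_nonneg_right hs2 (Real.exp_pos ((K₁+1)*s)).le]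
      _ ≤ max (M^2 + 4 * ‖c-1‖) ((2 + ‖q‖)/s₀^2) * (s^2 * rexp ((K₁+1) * s)) := by
          apply mul_le_mul_of_nonneg_right (le_max_right _ _) (by positivity)

lemma Gamma_ne_zero_of_re_pos' {s : ℂ} (hs : 0 < s.re) : Complex.Gamma s ≠ 0 := by
  apply Complex.Gamma_ne_zero
  intro m h
  rw [h] at hs
  simp only [Complex.neg_re, Complex.natCast_re] at hs
  have : (0:ℝ) ≤ (m:ℝ) := Nat.cast_nonneg m
  linarith

lemma watson_bound {c : ℂ} (hc : 0 < c.re) (a : ℂ) : ∃ C K : ℝ, 0 ≤ C ∧ 0 ≤ K ∧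
    ∀ x : ℝ, 1 ≤ x → -a.re + 1 ≤ x → K + 1 ≤ x →
    ‖Complex.Gamma ((x:ℂ) + a) / Complex.Gamma ((x:ℂ) + a + c)
      - ((x:ℂ) ^ (-c) + (-(c * (2*a + c - 1))/2) * (x:ℂ) ^ (-c - 1))‖
      ≤ C * (x - K) ^ (-c.re - 2) := by
  obtain ⟨C₀, K, hK0, hphi⟩ := phi_taylor_bound a c
  have hC₀ : 0 ≤ C₀ := by
    have h1 := hphi 1 one_pos
    have h2 : (0:ℝ) ≤ ‖phi a c 1 - 1 - (-a - (c-1)/2) * ((1:ℝ):ℂ)‖ := norm_nonneg _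
    nlinarith [Real.exp_pos (K * 1)]
  set q : ℂ := -a - (c - 1)/2 with hq
  refine ⟨C₀ * Real.Gamma (c.re + 2) / ‖Complex.Gamma c‖, K, by positivity, hK0, ?_⟩
  intro x hx1 hxa hxK
  have hx : (0:ℝ) < x := lt_of_lt_of_le one_pos hx1
  have hxK' : (0:ℝ) < x - K := by linarith
  have hu : 0 < ((x:ℂ) + a).re := by simp; linarith
  have huc : 0 < ((x:ℂ) + a + c).re := by simp; linarith
  have hΓc : Complex.Gamma c ≠ 0 := Gamma_ne_zero_of_re_pos' hc
  have hΓuc : Complex.Gamma ((x:ℂ) + a + c) ≠ 0 := Gamma_ne_zero_of_re_pos' huc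
  have hcne : c ≠ 0 := by intro h; rw [h] at hc; simp at hc
  have hxC : (x:ℂ) ≠ 0 := Complex.ofReal_ne_zero.mpr hx.ne'
  -- the two integrands
  set f : ℝ → ℂ := fun s => Complex.exp (-((x:ℂ) * s)) * (s:ℂ) ^ (c-1) * phi a c s with hf
  set g : ℝ → ℂ := fun s => Complex.exp (-((x:ℂ) * s)) * ((s:ℂ) ^ (c-1) + q * (s:ℂ) ^ c) with hg
  -- pointwise identification of the beta integrand with f
  have hbetaf : ∀ s ∈ Ioi (0:ℝ),
      Complex.exp (-((x:ℂ) + a) * s) * ((1 - Real.exp (-s) : ℝ) : ℂ) ^ (c - 1) = f s := by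
    intro s hs
    rw [mem_Ioi] at hs
    have h1 : (1 - Real.exp (-s) : ℝ) = s * uu s := by
      rw [uu, mul_div_cancel₀ _ hs.ne']
    rw [h1, Complex.ofReal_mul, mul_cpow_ofReal_nonneg hs.le (uu_pos hs).le, hf]
    rw [show (-((x:ℂ) + a) * s) = (-((x:ℂ) * s)) + (-a * s) by ring, Complex.exp_add]
    simp only [phi]
    ring
  -- f is integrable
  have hfInt : IntegrableOn f (Ioi 0) := by
    refine MeasureTheory.IntegrableOn.congr_fun (beta_integrand_integrable hu hc) hbetaf measurableSet_Ioi
  -- g is integrable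
  have hc1 : 0 < (c+1).re := by simp; linarith
  have hlap1 := laplace_integrable hc hx
  have hlap2 := laplace_integrable hc1 hx
  have hgInt : IntegrableOn g (Ioi 0) := by
    have h2 : IntegrableOn (fun s : ℝ => (s:ℂ) ^ c * Complex.exp (-((x:ℂ) * s))) (Ioi 0) := by
      refine MeasureTheory.IntegrableOn.congr_fun hlap2 (fun s _ => ?_) measurableSet_Ioi
      rw [show c + 1 - (1:ℂ) = c by ring]
    refine MeasureTheory.IntegrableOn.congr_fun (hlap1.add (h2.const_mul q)) (fun s _ => ?_) measurableSet_Ioi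
    simp only [hg, Pi.add_apply]; ring
  -- value of ∫ g
  have hgEval : ∫ s in Ioi (0:ℝ), g s
      = Complex.Gamma c * (x:ℂ) ^ (-c) + q * (Complex.Gamma (c+1) * (x:ℂ) ^ (-(c+1))) := by
    have h2 : IntegrableOn (fun s : ℝ => q * ((s:ℂ) ^ ((c+1)-1) * Complex.exp (-((x:ℂ) * s)))) (Ioi 0) :=
      hlap2.const_mul q
    have hgeq : (∫ s in Ioi (0:ℝ), g s) = ∫ s in Ioi (0:ℝ),
        ((s:ℂ) ^ (c-1) * Complex.exp (-((x:ℂ) * s))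
          + q * ((s:ℂ) ^ ((c+1)-1) * Complex.exp (-((x:ℂ) * s)))) := by
      refine setIntegral_congr_fun measurableSet_Ioi (fun s _ => ?_)
      simp only [hg]
      rw [show c + 1 - (1:ℂ) = c by ring]
      ring
    rw [hgeq, MeasureTheory.integral_add hlap1 h2, laplace_eval hc hx,
      MeasureTheory.integral_const_mul, laplace_eval hc1 hx]
  -- the beta identity
  have hbeta : Complex.Gamma ((x:ℂ) + a) / Complex.Gamma ((x:ℂ) + a + c)
      = (∫ s in Ioi (0:ℝ), f s) / Complex.Gamma c := by
    have h0 := Complex.Gamma_mul_Gamma_eq_betaIntegral hu hc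
    have h1 : Complex.betaIntegral ((x:ℂ) + a) c = ∫ s in Ioi (0:ℝ), f s := by
      rw [beta_subst]
      exact setIntegral_congr_fun measurableSet_Ioi hbetaf
    rw [← h1]
    field_simp
    linear_combination h0
  -- the main term
  have hmain : (x:ℂ) ^ (-c) + (-(c * (2*a + c - 1))/2) * (x:ℂ) ^ (-c - 1)
      = (∫ s in Ioi (0:ℝ), g s) / Complex.Gamma c := by
    rw [hgEval, Complex.Gamma_add_one c hcne]
    rw [show (-(c+1) : ℂ) = -c - 1 by ring]
    field_simp
    ring
  rw [hbeta, hmain, div_sub_div_same, ← MeasureTheory.integral_sub hfInt hgInt]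
  -- pointwise bound on f - g
  have hptw : ∀ᵐ s ∂(volume.restrict (Ioi (0:ℝ))),
      ‖f s - g s‖ ≤ C₀ * (s ^ (c.re + 1) * rexp (-((x - K) * s))) := by
    filter_upwards [ae_restrict_mem measurableSet_Ioi] with s hs
    rw [mem_Ioi] at hs
    have h1 : f s - g s = Complex.exp (-((x:ℂ) * s)) * (s:ℂ) ^ (c-1) * (phi a c s - 1 - q * s) := by
      simp only [hf, hg]
      have hsc : (s:ℂ) ^ c = (s:ℂ) ^ (c-1) * s := by
        rw [show c = (c-1) + 1 by ring, Complex.cpow_add _ _ (Complex.ofReal_ne_zero.mpr hs.ne')]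
        norm_num
      rw [hsc]; ring
    rw [h1, norm_mul, norm_mul]
    have h2 : ‖Complex.exp (-((x:ℂ) * s))‖ = rexp (-(x * s)) := by
      rw [Complex.norm_exp]
      norm_num
    have h3 : ‖((s:ℂ)) ^ (c-1)‖ = s ^ (c.re - 1) := by
      rw [Complex.norm_cpow_eq_rpow_re_of_pos hs]
      norm_num
    rw [h2, h3]
    calc rexp (-(x * s)) * s ^ (c.re - 1) * ‖phi a c s - 1 - q * s‖
        ≤ rexp (-(x * s)) * s ^ (c.re - 1) * (C₀ * (s^2 * rexp (K * s))) := by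
          apply mul_le_mul_of_nonneg_left (hphi s hs) (by positivity)
      _ = C₀ * ((s ^ (c.re - 1) * s^2) * (rexp (-(x*s)) * rexp (K * s))) := by ring
      _ = C₀ * (s ^ (c.re + 1) * rexp (-((x - K) * s))) := by
          have e1 : s ^ (c.re - 1) * s^2 = s ^ (c.re + 1) := by
            rw [← Real.rpow_natCast s 2, ← Real.rpow_add hs]; norm_num; congr 1; ring
          have e2 : rexp (-(x*s)) * rexp (K * s) = rexp (-((x-K)*s)) := by
            rw [← Real.exp_add]; congr 1; ring
          rw [e1, e2]
  have hgb : IntegrableOn (fun s : ℝ => C₀ * (s ^ (c.re + 1) * rexp (-((x - K) * s)))) (Ioi 0) := by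
    exact (rpow_exp_integrable (by linarith) hxK').const_mul C₀
  have hnormint := MeasureTheory.norm_integral_le_of_norm_le hgb hptw
  rw [MeasureTheory.integral_const_mul] at hnormint
  have hIeval : ∫ s in Ioi (0:ℝ), s ^ (c.re + 1) * rexp (-((x - K) * s))
      = (1/(x-K)) ^ (c.re + 2) * Real.Gamma (c.re + 2) := by
    have := integral_rpow_mul_exp_neg_mul_Ioi (by linarith : (0:ℝ) < c.re + 2) hxK'
    rw [show c.re + 2 - 1 = c.re + 1 by ring] at this
    exact this
  rw [hIeval] at hnormint
  calc ‖(∫ s in Ioi (0:ℝ), (f s - g s)) / Complex.Gamma c‖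
      = ‖∫ s in Ioi (0:ℝ), (f s - g s)‖ / ‖Complex.Gamma c‖ := by rw [norm_div]
    _ ≤ C₀ * ((1/(x-K)) ^ (c.re + 2) * Real.Gamma (c.re + 2)) / ‖Complex.Gamma c‖ := by
        gcongr
    _ = C₀ * Real.Gamma (c.re + 2) / ‖Complex.Gamma c‖ * (x - K) ^ (-c.re - 2) := by
        rw [one_div, Real.inv_rpow hxK'.le, ← Real.rpow_neg hxK'.le,
          show -(c.re+2) = -c.re - 2 by ring]
        ring

lemma ratio_isBigO_base {c : ℂ} (hc : 0 < c.re) (a : ℂ) :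
    (fun x : ℝ => Complex.Gamma ((x:ℂ) + a) / Complex.Gamma ((x:ℂ) + a + c)
      - (x:ℂ) ^ (-c) * (1 + (-(c * (2*a + c - 1))/2) / x)) =O[atTop]
      fun x : ℝ => x ^ (-c.re - 2) := by
  obtain ⟨C, K, hC, hK, hbd⟩ := watson_bound hc a
  rw [isBigO_iff]
  refine ⟨C * ((2:ℝ) ^ (-c.re-2))⁻¹, ?_⟩
  filter_upwards [eventually_ge_atTop (max (max 1 (-a.re + 1)) (2*K + 2))] with x hx
  have hx1 : 1 ≤ x := le_trans (le_max_of_le_left (le_max_left _ _)) hx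
  have hxa : -a.re + 1 ≤ x := le_trans (le_max_of_le_left (le_max_right _ _)) hx
  have hxK2 : 2*K + 2 ≤ x := le_trans (le_max_right _ _) hx
  have hxpos : 0 < x := lt_of_lt_of_le one_pos hx1
  have hxC : (x:ℂ) ≠ 0 := Complex.ofReal_ne_zero.mpr hxpos.ne'
  have hmt : (x:ℂ) ^ (-c) * (1 + (-(c * (2*a + c - 1))/2) / x)
      = (x:ℂ) ^ (-c) + (-(c * (2*a + c - 1))/2) * (x:ℂ) ^ (-c - 1) := by
    have h1 : (x:ℂ) ^ (-c - 1) = (x:ℂ) ^ (-c) * ((x:ℂ))⁻¹ := by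
      rw [show -c - 1 = -c + (-1) by ring, Complex.cpow_add _ _ hxC, Complex.cpow_neg_one]
    rw [h1, div_eq_mul_inv]
    ring
  rw [hmt]
  have hb := hbd x hx1 hxa (by linarith)
  have hrate : (x - K) ^ (-c.re - 2) ≤ (x/2) ^ (-c.re - 2) := by
    apply Real.rpow_le_rpow_of_nonpos (by linarith) (by linarith) (by linarith)
  have hhalf : (x/2 : ℝ) ^ (-c.re - 2) = x ^ (-c.re-2) * ((2:ℝ) ^ (-c.re-2))⁻¹ := by
    rw [Real.div_rpow hxpos.le (by norm_num)]
    field_simp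
  rw [hhalf] at hrate
  have : ‖x ^ (-c.re - 2)‖ = x ^ (-c.re-2) := by
    rw [Real.norm_eq_abs, abs_of_pos (Real.rpow_pos_of_pos hxpos _)]
  rw [this]
  calc ‖_‖ ≤ C * (x - K) ^ (-c.re - 2) := hb
    _ ≤ C * (x ^ (-c.re-2) * ((2:ℝ) ^ (-c.re-2))⁻¹) := by
        apply mul_le_mul_of_nonneg_left hrate hC
    _ = C * ((2:ℝ) ^ (-c.re-2))⁻¹ * x ^ (-c.re-2) := by ring

lemma ratio_isBigO_step (a c : ℂ)
    (IH : (fun x : ℝ => Complex.Gamma ((x:ℂ) + a) / Complex.Gamma ((x:ℂ) + a + (c+1))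
      - (x:ℂ) ^ (-(c+1)) * (1 + (-((c+1) * (2*a + (c+1) - 1))/2) / x)) =O[atTop]
      fun x : ℝ => x ^ (-(c+1).re - 2)) :
    (fun x : ℝ => Complex.Gamma ((x:ℂ) + a) / Complex.Gamma ((x:ℂ) + a + c)
      - (x:ℂ) ^ (-c) * (1 + (-(c * (2*a + c - 1))/2) / x)) =O[atTop]
      fun x : ℝ => x ^ (-c.re - 2) := by
  set κ₁ : ℂ := -((c+1) * (2*a + (c+1) - 1))/2 with hκ₁
  set κ : ℂ := -(c * (2*a + c - 1))/2 with hκ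
  set E₁ : ℝ → ℂ := fun x => Complex.Gamma ((x:ℂ) + a) / Complex.Gamma ((x:ℂ) + a + (c+1))
      - (x:ℂ) ^ (-(c+1)) * (1 + κ₁ / x) with hE₁
  have heq : (fun x : ℝ => Complex.Gamma ((x:ℂ) + a) / Complex.Gamma ((x:ℂ) + a + c)
      - (x:ℂ) ^ (-c) * (1 + κ / x))
      =ᶠ[atTop] (fun x : ℝ => E₁ x * ((x:ℂ) + a + c)
        + (κ₁*(a+c)) * ((x:ℂ) ^ (-c) * ((x:ℂ))⁻¹ * ((x:ℂ))⁻¹)) := by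
    filter_upwards [eventually_ge_atTop (max 1 (|(a + c).re| + 1))] with x hx
    have hx1 : 1 ≤ x := le_trans (le_max_left _ _) hx
    have hxpos : (0:ℝ) < x := lt_of_lt_of_le one_pos hx1
    have hxC : (x:ℂ) ≠ 0 := Complex.ofReal_ne_zero.mpr hxpos.ne'
    have hzne : (x:ℂ) + a + c ≠ 0 := by
      intro h
      have hre : ((x:ℂ) + a + c).re = x + (a+c).re := by simp; ring
      rw [h] at hre
      simp only [Complex.zero_re] at hre
      have h2 : |(a + c).re| + 1 ≤ x := le_trans (le_max_right _ _) hx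
      have h3 : -(|(a+c).re|) ≤ (a+c).re := neg_abs_le _
      linarith
    have hR : Complex.Gamma ((x:ℂ) + a) / Complex.Gamma ((x:ℂ) + a + c)
        = (Complex.Gamma ((x:ℂ) + a) / Complex.Gamma ((x:ℂ) + a + (c+1))) * ((x:ℂ) + a + c) := by
      have hG : Complex.Gamma ((x:ℂ) + a + (c+1)) = ((x:ℂ) + a + c) * Complex.Gamma ((x:ℂ) + a + c) := by
        rw [show (x:ℂ) + a + (c+1) = ((x:ℂ) + a + c) + 1 by ring, Complex.Gamma_add_one _ hzne]
      rw [hG, show Complex.Gamma ((x:ℂ) + a) / (((x:ℂ)+a+c) * Complex.Gamma ((x:ℂ)+a+c)) * ((x:ℂ)+a+c)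
          = (((x:ℂ)+a+c) * Complex.Gamma ((x:ℂ) + a)) / (((x:ℂ)+a+c) * Complex.Gamma ((x:ℂ)+a+c)) by ring,
        mul_div_mul_left _ _ hzne]
    simp only [hE₁]
    rw [hR]
    have hc1 : (x:ℂ) ^ (-(c+1)) = (x:ℂ) ^ (-c) * ((x:ℂ))⁻¹ := by
      rw [show -(c+1) = -c + (-1) by ring, Complex.cpow_add _ _ hxC, Complex.cpow_neg_one]
    rw [hc1]
    field_simp
    ring
  rw [show (-(c+1).re - 2) = -c.re - 3 by simp; ring] at IH
  have hlin : (fun x:ℝ => ((x:ℂ) + a + c)) =O[atTop] (fun x:ℝ => x) := by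
    rw [isBigO_iff]
    refine ⟨1 + ‖a + c‖, ?_⟩
    filter_upwards [eventually_ge_atTop (1:ℝ)] with x hx1
    have hxpos : (0:ℝ) < x := lt_of_lt_of_le one_pos hx1
    calc ‖(x:ℂ) + a + c‖ = ‖(x:ℂ) + (a + c)‖ := by rw [add_assoc]
      _ ≤ ‖(x:ℂ)‖ + ‖a + c‖ := norm_add_le _ _
      _ = x + ‖a + c‖ := by rw [Complex.norm_real, Real.norm_eq_abs, abs_of_pos hxpos]
      _ ≤ (1 + ‖a + c‖) * x := by nlinarith [norm_nonneg (a+c)]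
      _ = (1 + ‖a + c‖) * ‖x‖ := by rw [Real.norm_eq_abs, abs_of_pos hxpos]
  have t1 : (fun x:ℝ => E₁ x * ((x:ℂ) + a + c)) =O[atTop] fun x:ℝ => x ^ (-c.re - 2) := by
    have := IH.mul hlin
    refine this.trans_eventuallyEq ?_
    filter_upwards [eventually_gt_atTop (0:ℝ)] with x hx
    rw [← Real.rpow_add_one hx.ne']
    congr 1; ring
  have t2 : (fun x:ℝ => (κ₁*(a+c)) * ((x:ℂ) ^ (-c) * ((x:ℂ))⁻¹ * ((x:ℂ))⁻¹)) =O[atTop]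
      fun x:ℝ => x ^ (-c.re - 2) := by
    apply IsBigO.const_mul_left
    rw [isBigO_iff]
    refine ⟨1, ?_⟩
    filter_upwards [eventually_gt_atTop (0:ℝ)] with x hx
    have h1 : ‖(x:ℂ) ^ (-c) * ((x:ℂ))⁻¹ * ((x:ℂ))⁻¹‖ = x ^ (-c.re) * x⁻¹ * x⁻¹ := by
      rw [norm_mul, norm_mul]
      simp only [norm_inv, Complex.norm_real, Real.norm_eq_abs]
      rw [Complex.norm_cpow_eq_rpow_re_of_pos hx, abs_of_pos hx]
      norm_num
    rw [h1, Real.norm_eq_abs, abs_of_pos (Real.rpow_pos_of_pos hx _), one_mul,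
      ← Real.rpow_neg_one x, ← Real.rpow_add hx, ← Real.rpow_add hx]
    apply le_of_eq
    congr 1
    ring
  exact (t1.add t2).congr' heq.symm (EventuallyEq.refl _ _)

lemma ratio_isBigO_aux (n : ℕ) : ∀ c : ℂ, 0 < c.re + n → ∀ a : ℂ,
    (fun x : ℝ => Complex.Gamma ((x:ℂ) + a) / Complex.Gamma ((x:ℂ) + a + c)
      - (x:ℂ) ^ (-c) * (1 + (-(c * (2*a + c - 1))/2) / x)) =O[atTop]
      fun x : ℝ => x ^ (-c.re - 2) := by
  induction n with
  | zero => intro c hc a; exact ratio_isBigO_base (by simpa using hc) a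
  | succ n IH =>
      intro c hc a
      rcases lt_or_ge 0 c.re with h | h
      · exact ratio_isBigO_base h a
      · apply ratio_isBigO_step
        have := IH (c+1) (by simp; push_cast at hc ⊢; linarith) a
        exact this

lemma ratio_isBigO (a c : ℂ) :
    (fun x : ℝ => Complex.Gamma ((x:ℂ) + a) / Complex.Gamma ((x:ℂ) + a + c)
      - (x:ℂ) ^ (-c) * (1 + (-(c * (2*a + c - 1))/2) / x)) =O[atTop]
      fun x : ℝ => x ^ (-c.re - 2) := by
  obtain ⟨n, hn⟩ := exists_nat_gt (-c.re)
  exact ratio_isBigO_aux n c (by linarith) a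

lemma norm_sin_le (z : ℂ) : ‖Complex.sin z‖ ≤ rexp z.im / 2 + rexp (-z.im) / 2 := by
  rw [Complex.sin]
  rw [norm_div, norm_mul]
  simp only [Complex.norm_I, mul_one, Complex.norm_ofNat]
  calc ‖Complex.exp (-z*I) - Complex.exp (z*I)‖ / 2
      ≤ (‖Complex.exp (-z*I)‖ + ‖Complex.exp (z*I)‖) / 2 := by
        apply div_le_div_of_nonneg_right ?_ ?_
        · exact norm_sub_le _ _
        · norm_num
    _ = rexp z.im / 2 + rexp (-z.im) / 2 := by
        rw [Complex.norm_exp, Complex.norm_exp]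
        have h1 : (-z*I).re = z.im := by simp
        have h2 : (z*I).re = -z.im := by simp
        rw [h1, h2]; ring

/-- The Beta function `B(x,y) = Γ(x)Γ(y)/Γ(x+y)`. -/
noncomputable def cBeta (x y : ℂ) : ℂ := Complex.Gamma x * Complex.Gamma y / Complex.Gamma (x + y)

/-- As real `ζ → +∞` with `|sin(π(ζ-α))|` bounded away from `0`,
`B(α-ζ, γ) = Γ(γ) (sin(π(ζ-α-γ))/sin(π(ζ-α))) ζ^{-γ} [1 + γ(2α+γ-1)/(2ζ) + O(ζ^{-2})]`. -/
theorem stmt15 (α γ : ℂ) (hγ : ∀ n : ℕ, γ ≠ -(n : ℂ)) (δ : ℝ) (hδ : 0 < δ) :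
    (fun ζ : ℝ => cBeta (α - ζ) γ
        - Complex.Gamma γ
            * (Complex.sin ((π : ℂ) * ((ζ : ℂ) - α - γ))
                / Complex.sin ((π : ℂ) * ((ζ : ℂ) - α)))
            * (ζ : ℂ) ^ (-γ) * (1 + γ * (2 * α + γ - 1) / (2 * ζ)))
      =O[atTop ⊓ 𝓟 {ζ : ℝ | δ ≤ ‖Complex.sin ((π : ℂ) * ((ζ : ℂ) - α))‖}]
        (fun ζ : ℝ => ζ ^ (-γ.re - 2)) := by
  set F := atTop ⊓ 𝓟 {ζ : ℝ | δ ≤ ‖Complex.sin ((π : ℂ) * ((ζ : ℂ) - α))‖} with hF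
  set κ : ℂ := -(γ * (2*(1-α-γ) + γ - 1))/2 with hκ
  set T : ℝ → ℂ := fun ζ => Complex.sin ((π:ℂ)*((ζ:ℂ)-α-γ)) / Complex.sin ((π:ℂ)*((ζ:ℂ)-α)) with hT
  set R : ℝ → ℂ := fun ζ =>
    Complex.Gamma ((ζ:ℂ) + (1-α-γ)) / Complex.Gamma ((ζ:ℂ) + (1-α-γ) + γ) with hR
  set E : ℝ → ℂ := fun ζ => R ζ - (ζ:ℂ) ^ (-γ) * (1 + κ / ζ) with hE
  have hmemF : ∀ᶠ ζ : ℝ in F, δ ≤ ‖Complex.sin ((π:ℂ)*((ζ:ℂ)-α))‖ := by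
    rw [hF, Filter.eventually_inf_principal]
    exact Filter.Eventually.of_forall (fun ζ h => h)
  -- Step 1: eventual identity
  have heq : (fun ζ : ℝ => cBeta (α - ζ) γ
        - Complex.Gamma γ * T ζ * (ζ:ℂ) ^ (-γ) * (1 + γ * (2 * α + γ - 1) / (2 * ζ)))
      =ᶠ[F] (fun ζ : ℝ => (Complex.Gamma γ * T ζ) * E ζ) := by
    have hev : ∀ᶠ ζ : ℝ in F, max (α.re) ((α+γ).re) < ζ := by
      apply Filter.Eventually.filter_mono inf_le_left
      exact eventually_gt_atTop _
    filter_upwards [hev, hmemF] with ζ hζ hζS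
    have hζ1 : α.re < ζ := lt_of_le_of_lt (le_max_left _ _) hζ
    have hζ2 : (α+γ).re < ζ := lt_of_le_of_lt (le_max_right _ _) hζ
    have hsne : Complex.sin ((π:ℂ)*((ζ:ℂ)-α)) ≠ 0 := by
      intro h; rw [h, norm_zero] at hζS; linarith
    have hΓ1 : Complex.Gamma ((ζ:ℂ) + (1-α-γ)) ≠ 0 := by
      apply Gamma_ne_zero_of_re_pos'
      simp only [Complex.add_re, Complex.ofReal_re, Complex.sub_re, Complex.one_re]
      simp at hζ2 ⊢
      linarith
    have hΓ2 : Complex.Gamma ((ζ:ℂ) + (1-α-γ) + γ) ≠ 0 := by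
      apply Gamma_ne_zero_of_re_pos'
      simp at hζ1 ⊢
      linarith
    -- reflection identities
    have hA : Complex.Gamma (α - ζ) * Complex.Gamma ((ζ:ℂ) + (1-α-γ) + γ)
        = (π:ℂ) / (-Complex.sin ((π:ℂ)*((ζ:ℂ)-α))) := by
      have h := Complex.Gamma_mul_Gamma_one_sub (α - ζ)
      rw [show (1:ℂ) - (α - ζ) = (ζ:ℂ) + (1-α-γ) + γ by ring] at h
      rw [show ((π:ℂ) * (α - ζ)) = -((π:ℂ)*((ζ:ℂ)-α)) by ring, Complex.sin_neg] at h
      exact h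
    have hB : Complex.Gamma (α + γ - ζ) * Complex.Gamma ((ζ:ℂ) + (1-α-γ))
        = (π:ℂ) / (-Complex.sin ((π:ℂ)*((ζ:ℂ)-α-γ))) := by
      have h := Complex.Gamma_mul_Gamma_one_sub (α + γ - ζ)
      rw [show (1:ℂ) - (α + γ - ζ) = (ζ:ℂ) + (1-α-γ) by ring] at h
      rw [show ((π:ℂ) * (α + γ - ζ)) = -((π:ℂ)*((ζ:ℂ)-α-γ)) by ring, Complex.sin_neg] at h
      exact h
    have hcB : cBeta (α - ζ) γ = Complex.Gamma (α - ζ) * Complex.Gamma γ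
        / Complex.Gamma (α + γ - ζ) := by
      rw [cBeta, show α - ζ + γ = α + γ - (ζ:ℂ) by ring]
    have hkey : cBeta (α - ζ) γ = (Complex.Gamma γ * T ζ) * R ζ := by
      rcases eq_or_ne (Complex.sin ((π:ℂ)*((ζ:ℂ)-α-γ))) 0 with hs2 | hs2
      · have hΓz : Complex.Gamma (α + γ - ζ) = 0 := by
          rw [hs2] at hB
          simp only [neg_zero, div_zero] at hB
          rcases mul_eq_zero.mp hB with h | h
          · exact h
          · exact absurd h hΓ1
        rw [hcB, hΓz, div_zero]
        simp only [hT]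
        rw [hs2]
        simp
      · have hπ : ((π:ℂ)) ≠ 0 := by
          simpa using Real.pi_ne_zero
        have hGA : Complex.Gamma (α - ζ) =
            ((π:ℂ) / (-Complex.sin ((π:ℂ)*((ζ:ℂ)-α)))) / Complex.Gamma ((ζ:ℂ) + (1-α-γ) + γ) :=
          eq_div_of_mul_eq hΓ2 hA
        have hGB : Complex.Gamma (α + γ - ζ) =
            ((π:ℂ) / (-Complex.sin ((π:ℂ)*((ζ:ℂ)-α-γ)))) / Complex.Gamma ((ζ:ℂ) + (1-α-γ)) :=
          eq_div_of_mul_eq hΓ1 hB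
        rw [hcB, hGA, hGB, hT, hR]
        field_simp
    have hcorr : (1 : ℂ) + γ * (2 * α + γ - 1) / (2 * ζ) = 1 + κ / ζ := by
      rw [hκ, show -(γ * (2*(1-α-γ) + γ - 1))/2 = γ * (2*α + γ - 1)/2 by ring, div_div]
    rw [hkey, hcorr, hE]
    ring
  -- Step 2: Gamma γ * T is bounded on F
  have hTO : (fun ζ : ℝ => Complex.Gamma γ * T ζ) =O[F] (fun _ : ℝ => (1:ℝ)) := by
    rw [isBigO_iff]
    set t : ℝ := π * (-α.im - γ.im) with ht
    refine ⟨‖Complex.Gamma γ‖ * ((rexp t / 2 + rexp (-t) / 2) / δ), ?_⟩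
    filter_upwards [hmemF] with ζ hζS
    have hsnorm : ‖Complex.sin ((π:ℂ)*((ζ:ℂ)-α-γ))‖ ≤ rexp t / 2 + rexp (-t) / 2 := by
      have him : ((π:ℂ) * ((ζ:ℂ) - α - γ)).im = t := by
        rw [ht]; simp [Complex.mul_im]
      have := norm_sin_le ((π:ℂ) * ((ζ:ℂ) - α - γ))
      rwa [him] at this
    rw [norm_mul, norm_one, mul_one]
    apply mul_le_mul_of_nonneg_left ?_ (norm_nonneg _)
    simp only [hT]
    rw [norm_div]
    exact div_le_div₀ (by positivity) hsnorm hδ hζS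
  have hEO : E =O[F] (fun ζ : ℝ => ζ ^ (-γ.re - 2)) :=
    (ratio_isBigO (1-α-γ) γ).mono inf_le_left
  have hprod := hTO.mul hEO
  rw [show (fun x:ℝ => (1:ℝ) * x ^ (-γ.re - 2)) = fun x:ℝ => x ^ (-γ.re - 2)
    from funext (fun x => one_mul _)] at hprod
  exact heq.trans_isBigO hprod
end

section
/- Suppose ζ_n = n + β + A₁/(n+β) + A₂/(n+β)² + O(n^{−3}) as n → +∞, where β > 0 and A₁, A₂ are real. Then for fixed complex z (avoiding poles) and as N → +∞, ∏_{n≥N} (1+z/(n+α))/(1+z/ζ_n) = [Γ(N+α)Γ(N+β+z)/(Γ(N+β)Γ(N+α+z))]·exp[ A₁(f_{1,1}(β,β;N) − f_{1,1}(z+β,β;N)) + A₂(f_{1,2}(β,β;N) − f_{1,2}(z+β,β;N)) + O(N^{−3}) ], where f_{α₁,α₂}(z₁,z₂;N) = ∑_{n≥N} (n+z₁)^{−α₁}(n+z₂)^{−α₂}. -/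
open Real Complex Filter Asymptotics
open Topology

/-- If two complex numbers of norm ≤ 2 have equal exponentials, they are equal. -/
lemma aux_log_eq_of_exp_eq {p q : ℂ} (h : Complex.exp p = Complex.exp q)
    (hp : ‖p‖ ≤ 2) (hq : ‖q‖ ≤ 2) : p = q := by
  obtain ⟨n, hn⟩ := Complex.exp_eq_exp_iff_exists_int.mp h
  have hpq : ‖p - q‖ ≤ 4 := by
    calc ‖p - q‖ ≤ ‖p‖ + ‖q‖ := norm_sub_le _ _
    _ ≤ 4 := by linarith
  have : p - q = n * (2 * π * I) := by rw [hn]; ring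
  rw [this] at hpq
  have h2 : ‖(n : ℂ) * (2 * π * I)‖ = |(n:ℝ)| * (2 * π) := by
    rw [norm_mul, norm_mul, norm_mul]
    simp only [Complex.norm_intCast, Complex.norm_ofNat, Complex.norm_real, Complex.norm_I,
      Real.norm_eq_abs, abs_of_pos Real.pi_pos, mul_one]
  rw [h2] at hpq
  have hπ : (3:ℝ) < π := by
    have := Real.pi_gt_d6
    linarith
  have hn0 : n = 0 := by
    by_contra hne
    have : (1:ℝ) ≤ |(n:ℝ)| := by
      rw [← Int.cast_abs]
      exact_mod_cast Int.one_le_abs (by omega)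
    nlinarith
  rw [hn0] at hn
  simp at hn
  rw [hn]

lemma aux_norm_log_sub {x : ℂ} (hx : ‖x‖ ≤ 1/2) : ‖Complex.log (1 + x) - x‖ ≤ ‖x‖^2 := by
  have h1 : ‖x‖ < 1 := by linarith
  refine (Complex.norm_log_one_add_sub_self_le h1).trans ?_
  have h2 : (1 - ‖x‖)⁻¹ ≤ 2 := by
    rw [inv_le_comm₀ (by linarith) (by norm_num)]
    linarith
  have h3 : (0:ℝ) ≤ ‖x‖^2 := sq_nonneg _
  nlinarith

/-- auxiliary telescoping weight -/
noncomputable def hfun (m : ℕ) : ℝ := (((m:ℝ)+1) * ((m:ℝ)+2) * ((m:ℝ)+3))⁻¹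

lemma hfun_nonneg (m : ℕ) : 0 ≤ hfun m := by
  unfold hfun
  positivity

lemma hfun_sub (m : ℕ) : hfun m - hfun (m+1) = 3 / (((m:ℝ)+1)*((m:ℝ)+2)*((m:ℝ)+3)*((m:ℝ)+4)) := by
  unfold hfun
  push_cast
  have h1 : ((m:ℝ)+1) ≠ 0 := by positivity
  have h2 : ((m:ℝ)+2) ≠ 0 := by positivity
  have h3 : ((m:ℝ)+3) ≠ 0 := by positivity
  have h4 : ((m:ℝ)+4) ≠ 0 := by positivity
  field_simp
  ring

lemma aux_inv4_le {m : ℕ} (hm : 1 ≤ m) : ((m:ℝ))⁻¹^4 ≤ 40 * (hfun m - hfun (m+1)) := by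
  rw [hfun_sub]
  have hx : (1:ℝ) ≤ (m:ℝ) := by exact_mod_cast hm
  rw [inv_pow, div_eq_mul_inv]
  rw [inv_le_iff_one_le_mul₀ (by positivity)]
  have key : ((m:ℝ)+1)*((m:ℝ)+2)*((m:ℝ)+3)*((m:ℝ)+4) ≤ 120 * (m:ℝ)^4 := by
    nlinarith [sq_nonneg ((m:ℝ)-1), pow_le_pow_left₀ (by linarith : (0:ℝ) ≤ 1) hx 4]
  have hpos : (0:ℝ) < ((m:ℝ)+1)*((m:ℝ)+2)*((m:ℝ)+3)*((m:ℝ)+4) := by positivity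
  have h5 : (0:ℝ) < (m:ℝ)^4 := by positivity
  rw [show (40:ℝ) * (3 * ((↑m + 1) * (↑m + 2) * (↑m + 3) * (↑m + 4))⁻¹) * (m:ℝ)^4
      = (120 * (m:ℝ)^4) / (((m:ℝ)+1)*((m:ℝ)+2)*((m:ℝ)+3)*((m:ℝ)+4)) by
    field_simp; ring]
  rw [le_div_iff₀ hpos]
  nlinarith

lemma hfun_le {N : ℕ} (hN : 1 ≤ N) : hfun N ≤ ((N:ℝ))⁻¹^3 := by
  unfold hfun
  have hx : (1:ℝ) ≤ (N:ℝ) := by exact_mod_cast hN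
  rw [inv_pow]
  apply inv_anti₀ (by positivity)
  nlinarith


/-- tail sum bound via telescoping -/
lemma aux_tail_bound (g : ℕ → ℂ) (C : ℝ) (hC : 0 ≤ C) (N : ℕ)
    (hb : ∀ n : ℕ, ‖g (N+n)‖ ≤ C * (hfun (N+n) - hfun (N+n+1))) :
    Summable (fun n => ‖g (N+n)‖) ∧ ∑' n, ‖g (N+n)‖ ≤ C * hfun N := by
  have hpart : ∀ K : ℕ, ∑ n ∈ Finset.range K, ‖g (N+n)‖ ≤ C * hfun N := by
    intro K
    calc ∑ n ∈ Finset.range K, ‖g (N+n)‖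
        ≤ ∑ n ∈ Finset.range K, (C * hfun (N+n) - C * hfun (N+n+1)) := by
          apply Finset.sum_le_sum
          intro i _
          have := hb i
          have h2 : N + i + 1 = N + (i+1) := by omega
          rw [h2] at this ⊢
          linarith [this]
      _ = C * hfun (N+0) - C * hfun (N+K) := by
          exact Finset.sum_range_sub' (fun i => C * hfun (N+i)) K
      _ ≤ C * hfun N := by
          have h0 : 0 ≤ C * hfun (N+K) := mul_nonneg hC (hfun_nonneg _)
          simp only [Nat.add_zero]
          linarith
  have hsum : Summable (fun n => ‖g (N+n)‖) :=
    summable_of_sum_range_le (fun n => norm_nonneg _) hpart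
  exact ⟨hsum, Real.tsum_le_of_sum_range_le (fun n => norm_nonneg _) hpart⟩

/-- summability of tails with ≤ C/m² bounds -/
lemma aux_summable_tail (g : ℕ → ℂ) (C : ℝ) (N : ℕ) (hN : 1 ≤ N)
    (hb : ∀ n : ℕ, ‖g (N+n)‖ ≤ C * ((N+n : ℝ))⁻¹^2) :
    Summable (fun n => g (N+n)) := by
  apply Summable.of_norm_bounded (g := fun n : ℕ => C * ((N+n : ℝ))⁻¹^2) _ hb
  apply Summable.mul_left
  have h : Summable (fun n : ℕ => ((n:ℝ))⁻¹^2) := by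
    simpa [inv_pow] using (Real.summable_one_div_nat_pow.mpr (by norm_num : 1 < 2))
  have := (summable_nat_add_iff N).mpr h
  apply this.congr
  intro n
  push_cast
  ring_nf

lemma aux_fid {K : Type*} [Field K] {A B Z F PA PB PAz PBz : K}
    (hA : A ≠ 0) (hB : B ≠ 0) (hZ : Z ≠ 0) (hF : F ≠ 0) (hPA : PA ≠ 0) (hPB : PB ≠ 0)
    (hPAz : PAz ≠ 0) (hPBz : PBz ≠ 0) :
    PAz * PB / (PA * PBz) = A * F / PA * (B * Z * F / PBz) / (B * F / PB * (A * Z * F / PAz)) := by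
  have hN : A * F * (B * Z * F) = B * F * (A * Z * F) := by ring
  have hN2 : B * F * (A * Z * F) ≠ 0 := by
    apply mul_ne_zero (mul_ne_zero hB hF)
    exact mul_ne_zero (mul_ne_zero hA hZ) hF
  rw [div_mul_div_comm, div_mul_div_comm, div_div_div_comm, hN, div_self hN2, one_div_div]
  ring

lemma aux_gamma_tail (α β : ℝ) (hα : 0 < α) (hβ : 0 < β) (z : ℂ)
    (hz1 : ∀ n : ℕ, (n : ℂ) + α + z ≠ 0)
    (hz3 : ∀ n : ℕ, (n : ℂ) + β + z ≠ 0) (N : ℕ)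
    (hmul : Multipliable fun n : ℕ => (1 + z / (((N+n : ℕ) : ℂ) + α)) / (1 + z / (((N+n : ℕ) : ℂ) + β))) :
    (∏' n : ℕ, (1 + z / (((N+n : ℕ) : ℂ) + α)) / (1 + z / (((N+n : ℕ) : ℂ) + β)))
      = Complex.Gamma ((N:ℂ)+α) * Complex.Gamma ((N:ℂ)+β+z)
          / (Complex.Gamma ((N:ℂ)+β) * Complex.Gamma ((N:ℂ)+α+z)) := by
  have hαm : ∀ m : ℕ, ((m:ℂ)+α) ≠ 0 := by
    intro m
    have : ((m:ℂ)+α) = (((m:ℝ)+α : ℝ) : ℂ) := by push_cast; ring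
    rw [this, Complex.ofReal_ne_zero]
    positivity
  have hβm : ∀ m : ℕ, ((m:ℂ)+β) ≠ 0 := by
    intro m
    have : ((m:ℂ)+β) = (((m:ℝ)+β : ℝ) : ℂ) := by push_cast; ring
    rw [this, Complex.ofReal_ne_zero]
    positivity
  -- factor rewriting
  have hfac : ∀ m : ℕ, (1 + z / ((m:ℂ) + α)) / (1 + z / ((m:ℂ) + β))
      = (((m:ℂ)+α+z) * ((m:ℂ)+β)) / ((((m:ℂ)+α)) * (((m:ℂ)+β+z))) := by
    intro m
    have h1 : ∀ a : ℂ, a ≠ 0 → 1 + z / a = (a + z) / a := by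
      intro a ha
      rw [add_div, div_self ha]
    rw [h1 _ (hαm m), h1 _ (hβm m), div_div_div_comm, div_div_eq_mul_div,
      div_mul_eq_mul_div, div_div]
    ring_nf
  -- the key finite identity
  have key : ∀ k : ℕ, 1 ≤ k →
      ∏ j ∈ Finset.range (k+1), ((1 + z / (((N+j : ℕ) : ℂ) + α)) / (1 + z / (((N+j : ℕ) : ℂ) + β)))
        = Complex.GammaSeq ((N:ℂ)+α) k * Complex.GammaSeq ((N:ℂ)+β+z) k
            / (Complex.GammaSeq ((N:ℂ)+β) k * Complex.GammaSeq ((N:ℂ)+α+z) k) := by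
    intro k hk
    have hkc : ((k:ℂ)) ≠ 0 := Nat.cast_ne_zero.mpr (by omega)
    have e1 : ((k:ℂ)) ^ ((N:ℂ)+β+z) = ((k:ℂ)) ^ ((N:ℂ)+β) * ((k:ℂ)) ^ z := by
      rw [← Complex.cpow_add _ _ hkc]
    have e2 : ((k:ℂ)) ^ ((N:ℂ)+α+z) = ((k:ℂ)) ^ ((N:ℂ)+α) * ((k:ℂ)) ^ z := by
      rw [← Complex.cpow_add _ _ hkc]
    have hfac' : ∀ j ∈ Finset.range (k+1),
        (1 + z / (((N+j : ℕ) : ℂ) + α)) / (1 + z / (((N+j : ℕ) : ℂ) + β))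
        = ((((N:ℂ)+α+z) + j) * (((N:ℂ)+β) + j)) / (((((N:ℂ)+α) + j)) * ((((N:ℂ)+β+z) + j))) := by
      intro j _
      rw [hfac (N+j)]
      push_cast
      ring_nf
    rw [Finset.prod_congr rfl hfac']
    rw [Finset.prod_div_distrib, Finset.prod_mul_distrib, Finset.prod_mul_distrib]
    simp only [Complex.GammaSeq]
    rw [e1, e2]
    have hPA : ∏ j ∈ Finset.range (k+1), (((N:ℂ)+α) + j) ≠ 0 := by
      rw [Finset.prod_ne_zero_iff]
      intro j _
      have : ((N:ℂ)+α) + j = (((N+j:ℕ):ℂ)+α) := by push_cast; ring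
      rw [this]; exact hαm _
    have hPB : ∏ j ∈ Finset.range (k+1), (((N:ℂ)+β) + j) ≠ 0 := by
      rw [Finset.prod_ne_zero_iff]
      intro j _
      have : ((N:ℂ)+β) + j = (((N+j:ℕ):ℂ)+β) := by push_cast; ring
      rw [this]; exact hβm _
    have hPAz : ∏ j ∈ Finset.range (k+1), (((N:ℂ)+α+z) + j) ≠ 0 := by
      rw [Finset.prod_ne_zero_iff]
      intro j _
      have : ((N:ℂ)+α+z) + j = (((N+j:ℕ):ℂ)+α+z) := by push_cast; ring
      rw [this]; exact hz1 _
    have hPBz : ∏ j ∈ Finset.range (k+1), (((N:ℂ)+β+z) + j) ≠ 0 := by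
      rw [Finset.prod_ne_zero_iff]
      intro j _
      have : ((N:ℂ)+β+z) + j = (((N+j:ℕ):ℂ)+β+z) := by push_cast; ring
      rw [this]; exact hz3 _
    have hfact : ((Nat.factorial k : ℕ) : ℂ) ≠ 0 := Nat.cast_ne_zero.mpr (Nat.factorial_ne_zero k)
    have hcp1 : ((k:ℂ)) ^ ((N:ℂ)+α) ≠ 0 := by
      rw [Ne, Complex.cpow_eq_zero_iff]
      tauto
    have hcp2 : ((k:ℂ)) ^ ((N:ℂ)+β) ≠ 0 := by
      rw [Ne, Complex.cpow_eq_zero_iff]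
      tauto
    have hcp3 : ((k:ℂ)) ^ z ≠ 0 := by
      rw [Ne, Complex.cpow_eq_zero_iff]
      tauto
    exact aux_fid hcp1 hcp2 hcp3 hfact hPA hPB hPAz hPBz
  -- limits
  have hne1 : Complex.Gamma ((N:ℂ)+β) ≠ 0 := by
    apply Complex.Gamma_ne_zero
    intro m
    have : ((N:ℂ)+β) = (((N:ℝ)+β : ℝ) : ℂ) := by push_cast; ring
    rw [this]
    intro heq
    have : ((N:ℝ)+β) = -(m:ℝ) := by
      have := congrArg Complex.re heq
      simpa using this
    have hm : (0:ℝ) ≤ (m:ℝ) := Nat.cast_nonneg m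
    have hN : (0:ℝ) ≤ (N:ℝ) := Nat.cast_nonneg N
    linarith
  have hne2 : Complex.Gamma ((N:ℂ)+α+z) ≠ 0 := by
    apply Complex.Gamma_ne_zero
    intro m
    intro hbad
    apply hz1 (N+m)
    push_cast
    rw [show ((N:ℂ)+(m:ℂ)+α+z) = ((N:ℂ)+α+z) + m by ring, hbad]
    ring
  have hR : Tendsto (fun k : ℕ => Complex.GammaSeq ((N:ℂ)+α) k * Complex.GammaSeq ((N:ℂ)+β+z) k
      / (Complex.GammaSeq ((N:ℂ)+β) k * Complex.GammaSeq ((N:ℂ)+α+z) k)) atTop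
      (𝓝 (Complex.Gamma ((N:ℂ)+α) * Complex.Gamma ((N:ℂ)+β+z)
          / (Complex.Gamma ((N:ℂ)+β) * Complex.Gamma ((N:ℂ)+α+z)))) := by
    apply Tendsto.div
    · exact (Complex.GammaSeq_tendsto_Gamma _).mul (Complex.GammaSeq_tendsto_Gamma _)
    · exact (Complex.GammaSeq_tendsto_Gamma _).mul (Complex.GammaSeq_tendsto_Gamma _)
    · exact mul_ne_zero hne1 hne2
  have hcomp : Tendsto (fun K : ℕ => Complex.GammaSeq ((N:ℂ)+α) (K-1) * Complex.GammaSeq ((N:ℂ)+β+z) (K-1)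
      / (Complex.GammaSeq ((N:ℂ)+β) (K-1) * Complex.GammaSeq ((N:ℂ)+α+z) (K-1))) atTop
      (𝓝 (Complex.Gamma ((N:ℂ)+α) * Complex.Gamma ((N:ℂ)+β+z)
          / (Complex.Gamma ((N:ℂ)+β) * Complex.Gamma ((N:ℂ)+α+z)))) :=
    hR.comp (tendsto_sub_atTop_nat 1)
  have hPtend : Tendsto (fun K : ℕ => ∏ n ∈ Finset.range K,
      ((1 + z / (((N+n : ℕ) : ℂ) + α)) / (1 + z / (((N+n : ℕ) : ℂ) + β)))) atTop
      (𝓝 (Complex.Gamma ((N:ℂ)+α) * Complex.Gamma ((N:ℂ)+β+z)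
          / (Complex.Gamma ((N:ℂ)+β) * Complex.Gamma ((N:ℂ)+α+z)))) := by
    apply hcomp.congr'
    filter_upwards [eventually_ge_atTop 2] with K hK
    have hK1 : K - 1 + 1 = K := by omega
    rw [← key (K-1) (by omega), hK1]
  exact tendsto_nhds_unique (hmul.hasProd.tendsto_prod_nat) hPtend

noncomputable def Ffac (α : ℝ) (ζ : ℕ → ℝ) (z : ℂ) (m : ℕ) : ℂ :=
  (1 + z / ((m:ℂ) + α)) / (1 + z / ((ζ m : ℂ)))

noncomputable def Gfac (α β : ℝ) (z : ℂ) (m : ℕ) : ℂ :=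
  (1 + z / ((m:ℂ) + α)) / (1 + z / ((m:ℂ) + β))

noncomputable def dd (β : ℝ) (ζ : ℕ → ℝ) (m : ℕ) : ℂ := ((ζ m : ℂ)) - ((m:ℂ) + β)

noncomputable def rho (β A₁ A₂ : ℝ) (ζ : ℕ → ℝ) (m : ℕ) : ℂ :=
  dd β ζ m - (A₁:ℂ)/((m:ℂ)+β) - (A₂:ℂ)/((m:ℂ)+β)^2

noncomputable def eterm (α β A₁ A₂ : ℝ) (ζ : ℕ → ℝ) (z : ℂ) (m : ℕ) : ℂ :=
  Complex.log (Ffac α ζ z m) - Complex.log (Gfac α β z m)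
    - (A₁:ℂ) * ((((m:ℂ)+β)⁻¹ * ((m:ℂ)+β)⁻¹) - (((m:ℂ)+β+z)⁻¹ * ((m:ℂ)+β)⁻¹))
    - (A₂:ℂ) * ((((m:ℂ)+β)⁻¹ * (((m:ℂ)+β)^2)⁻¹) - (((m:ℂ)+β+z)⁻¹ * (((m:ℂ)+β)^2)⁻¹))

lemma frac_sub_one {a b z : ℂ} (ha : a ≠ 0) (hb : b ≠ 0) (hbz : b + z ≠ 0) :
    (1 + z/a)/(1 + z/b) - 1 = z*(b - a)/(a*(b+z)) := by
  have h1 : 1 + z/a = (a+z)/a := by rw [add_div, div_self ha]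
  have h2 : 1 + z/b = (b+z)/b := by rw [add_div, div_self hb]
  rw [h1, h2]
  field_simp
  ring

lemma frac_ratio {b c z : ℂ} (hb : b ≠ 0) (hc : c ≠ 0) (hbz : b+z ≠ 0) (hcz : c+z ≠ 0) :
    (1 + z/b)/(1 + z/c) = (1 + (c-b)/b)/(1 + (c-b)/(b+z)) := by
  have h1 : 1 + z/b = (b+z)/b := by rw [add_div, div_self hb]
  have h2 : 1 + z/c = (c+z)/c := by rw [add_div, div_self hc]
  have h3 : 1 + (c-b)/b = c/b := by
    rw [eq_div_iff hb, add_mul, div_mul_cancel₀ _ hb]; ring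
  have h4 : 1 + (c-b)/(b+z) = (c+z)/(b+z) := by
    rw [eq_div_iff hbz, add_mul, div_mul_cancel₀ _ hbz]; ring
  rw [h1, h2, h3, h4]
  rw [div_eq_div_iff (div_ne_zero hcz hc) (div_ne_zero hcz hbz)]
  rw [div_mul_div_comm, div_mul_div_comm]
  rw [div_eq_div_iff (mul_ne_zero hb hbz) (mul_ne_zero hb hc)]
  ring

set_option maxHeartbeats 2000000 in
lemma aux_perm (α β A₁ A₂ : ℝ) (hβ : 0 < β) (hα : 0 < α) (ζ : ℕ → ℝ) (z : ℂ) (C₃ : ℝ)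
    (hC₃ : 0 ≤ C₃) (m : ℕ)
    (hz1m : (m:ℂ) + α + z ≠ 0) (hz2m : ((ζ m : ℂ)) + z ≠ 0)
    (hz3m : (m:ℂ) + β + z ≠ 0) (hζ0m : ζ m ≠ 0)
    (hm1 : 1 ≤ (m:ℝ))
    (hzm : ‖z‖ + β + 1 ≤ (m:ℝ)/2)
    (hρm : ‖rho β A₁ A₂ ζ m‖ ≤ C₃ * ((m:ℝ))⁻¹^3)
    (hsm : (C₃ + |A₁| + |A₂|) * ((m:ℝ))⁻¹ ≤ 1/4)
    (hsm2 : (2*‖z‖*((C₃ + |A₁| + |A₂|) + |β - α| + 1)) * ((m:ℝ))⁻¹ ≤ 1/2) :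
    (Complex.log (Ffac α ζ z m) - Complex.log (Gfac α β z m)
        = Complex.log (1 + dd β ζ m / ((m:ℂ)+β)) - Complex.log (1 + dd β ζ m / ((m:ℂ)+β+z)))
    ∧ ‖eterm α β A₁ A₂ ζ z m‖ ≤ (5*(C₃ + |A₁| + |A₂|)^2 + 3*C₃) * (((m:ℝ))⁻¹)^4
    ∧ ‖Ffac α ζ z m - 1‖ ≤ (2*‖z‖*((C₃ + |A₁| + |A₂|) + |β - α| + 1)) * (((m:ℝ))⁻¹)^2
    ∧ ‖Gfac α β z m - 1‖ ≤ (2*‖z‖*((C₃ + |A₁| + |A₂|) + |β - α| + 1)) * (((m:ℝ))⁻¹)^2 := by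
  set Cδ := C₃ + |A₁| + |A₂| with hCδ
  set CE := 2*‖z‖*(Cδ + |β - α| + 1) with hCE
  have hm0 : (0:ℝ) < m := by linarith
  have hCδ0 : 0 ≤ Cδ := by positivity
  have hti : (0:ℝ) < ((m:ℝ))⁻¹ := by positivity
  have hti1 : ((m:ℝ))⁻¹ ≤ 1 := by
    rw [inv_le_one_iff₀]; right; exact hm1
  -- basic nonvanishing and norms
  have hacast : ((m:ℂ)+α) = (((m:ℝ)+α : ℝ) : ℂ) := by push_cast; ring
  have hbcast : ((m:ℂ)+β) = (((m:ℝ)+β : ℝ) : ℂ) := by push_cast; ring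
  have ha0 : ((m:ℂ)+α) ≠ 0 := by
    rw [hacast, Complex.ofReal_ne_zero]; positivity
  have hb0 : ((m:ℂ)+β) ≠ 0 := by
    rw [hbcast, Complex.ofReal_ne_zero]; positivity
  have hc0 : ((ζ m : ℂ)) ≠ 0 := Complex.ofReal_ne_zero.mpr hζ0m
  have hanorm : ‖((m:ℂ)+α)‖ = (m:ℝ)+α := by
    rw [hacast, Complex.norm_real, Real.norm_eq_abs, abs_of_pos (by positivity)]
  have hbnorm : ‖((m:ℂ)+β)‖ = (m:ℝ)+β := by
    rw [hbcast, Complex.norm_real, Real.norm_eq_abs, abs_of_pos (by positivity)]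
  have hbznorm : (m:ℝ)/2 ≤ ‖(m:ℂ)+β+z‖ := by
    have h1 : ‖((m:ℂ)+β)‖ ≤ ‖(m:ℂ)+β+z‖ + ‖z‖ := by
      calc ‖((m:ℂ)+β)‖ = ‖((m:ℂ)+β+z) - z‖ := by ring_nf
      _ ≤ ‖(m:ℂ)+β+z‖ + ‖z‖ := norm_sub_le _ _
    rw [hbnorm] at h1
    linarith
  -- inverse norms
  have hbinv : ‖((m:ℂ)+β)⁻¹‖ ≤ ((m:ℝ))⁻¹ := by
    rw [norm_inv, hbnorm]
    apply inv_anti₀ hm0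
    linarith
  have hainv : ‖((m:ℂ)+α)⁻¹‖ ≤ ((m:ℝ))⁻¹ := by
    rw [norm_inv, hanorm]
    apply inv_anti₀ hm0
    linarith
  have hbzinv : ‖((m:ℂ)+β+z)⁻¹‖ ≤ 2*((m:ℝ))⁻¹ := by
    rw [norm_inv]
    have h2 : (0:ℝ) < (m:ℝ)/2 := by linarith
    calc ‖(m:ℂ)+β+z‖⁻¹ ≤ ((m:ℝ)/2)⁻¹ := inv_anti₀ h2 hbznorm
    _ = 2*((m:ℝ))⁻¹ := by field_simp
  -- delta bound
  have hδ : ‖dd β ζ m‖ ≤ Cδ * ((m:ℝ))⁻¹ := by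
    have hdd : dd β ζ m = rho β A₁ A₂ ζ m + (A₁:ℂ)/((m:ℂ)+β) + (A₂:ℂ)/((m:ℂ)+β)^2 := by
      rw [rho]; ring
    rw [hdd]
    have h1 : ‖(A₁:ℂ)/((m:ℂ)+β)‖ ≤ |A₁| * ((m:ℝ))⁻¹ := by
      rw [div_eq_mul_inv, norm_mul, Complex.norm_real, Real.norm_eq_abs]
      exact mul_le_mul_of_nonneg_left hbinv (abs_nonneg _)
    have h2 : ‖(A₂:ℂ)/((m:ℂ)+β)^2‖ ≤ |A₂| * ((m:ℝ))⁻¹ := by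
      rw [div_eq_mul_inv, norm_mul, Complex.norm_real, Real.norm_eq_abs, ← inv_pow, norm_pow]
      have : ‖((m:ℂ)+β)⁻¹‖^2 ≤ ((m:ℝ))⁻¹^2 := by
        apply pow_le_pow_left₀ (norm_nonneg _) hbinv
      have h3 : ((m:ℝ))⁻¹^2 ≤ ((m:ℝ))⁻¹ :=
        pow_le_of_le_one (le_of_lt hti) hti1 (by norm_num)
      apply mul_le_mul_of_nonneg_left (le_trans this h3) (abs_nonneg _)
    have h0 : ‖rho β A₁ A₂ ζ m‖ ≤ C₃ * ((m:ℝ))⁻¹ := by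
      refine hρm.trans ?_
      have h4 : ((m:ℝ))⁻¹^3 ≤ ((m:ℝ))⁻¹ :=
        pow_le_of_le_one (le_of_lt hti) hti1 (by norm_num)
      nlinarith
    calc ‖rho β A₁ A₂ ζ m + (A₁:ℂ)/((m:ℂ)+β) + (A₂:ℂ)/((m:ℂ)+β)^2‖
        ≤ ‖rho β A₁ A₂ ζ m + (A₁:ℂ)/((m:ℂ)+β)‖ + ‖(A₂:ℂ)/((m:ℂ)+β)^2‖ := norm_add_le _ _
      _ ≤ ‖rho β A₁ A₂ ζ m‖ + ‖(A₁:ℂ)/((m:ℂ)+β)‖ + ‖(A₂:ℂ)/((m:ℂ)+β)^2‖ := by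
          linarith [norm_add_le (rho β A₁ A₂ ζ m) ((A₁:ℂ)/((m:ℂ)+β))]
      _ ≤ Cδ * ((m:ℝ))⁻¹ := by rw [hCδ]; linarith
  -- w and u bounds
  have hw : ‖dd β ζ m / ((m:ℂ)+β)‖ ≤ Cδ * (((m:ℝ))⁻¹)^2 := by
    rw [div_eq_mul_inv, norm_mul]
    calc ‖dd β ζ m‖ * ‖((m:ℂ)+β)⁻¹‖ ≤ (Cδ * ((m:ℝ))⁻¹) * ((m:ℝ))⁻¹ :=
          mul_le_mul hδ hbinv (norm_nonneg _) (by positivity)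
      _ = Cδ * (((m:ℝ))⁻¹)^2 := by ring
  have hu : ‖dd β ζ m / ((m:ℂ)+β+z)‖ ≤ 2*Cδ * (((m:ℝ))⁻¹)^2 := by
    rw [div_eq_mul_inv, norm_mul]
    calc ‖dd β ζ m‖ * ‖((m:ℂ)+β+z)⁻¹‖ ≤ (Cδ * ((m:ℝ))⁻¹) * (2*((m:ℝ))⁻¹) :=
          mul_le_mul hδ hbzinv (norm_nonneg _) (by positivity)
      _ = 2*Cδ * (((m:ℝ))⁻¹)^2 := by ring
  have ht2 : (((m:ℝ))⁻¹)^2 ≤ ((m:ℝ))⁻¹ :=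
    pow_le_of_le_one (le_of_lt hti) hti1 (by norm_num)
  have hw2 : ‖dd β ζ m / ((m:ℂ)+β)‖ ≤ 1/2 := by
    refine hw.trans ?_
    calc Cδ * (((m:ℝ))⁻¹)^2 ≤ Cδ * ((m:ℝ))⁻¹ := by nlinarith
      _ ≤ 1/2 := by linarith
  have hu2 : ‖dd β ζ m / ((m:ℂ)+β+z)‖ ≤ 1/2 := by
    refine hu.trans ?_
    calc 2*Cδ * (((m:ℝ))⁻¹)^2 ≤ 2*(Cδ * ((m:ℝ))⁻¹) := by nlinarith
      _ ≤ 1/2 := by linarith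
  -- 1 + w and 1 + u
  have h1w : 1 + dd β ζ m / ((m:ℂ)+β) = ((ζ m : ℂ))/((m:ℂ)+β) := by
    rw [dd, eq_div_iff hb0, add_mul, div_mul_cancel₀ _ hb0]; ring
  have h1u : 1 + dd β ζ m / ((m:ℂ)+β+z) = ((ζ m : ℂ)+z)/((m:ℂ)+β+z) := by
    rw [dd, eq_div_iff hz3m, add_mul, div_mul_cancel₀ _ hz3m]; ring
  have h1w0 : 1 + dd β ζ m / ((m:ℂ)+β) ≠ 0 := by
    rw [h1w]; exact div_ne_zero hc0 hb0
  have h1u0 : 1 + dd β ζ m / ((m:ℂ)+β+z) ≠ 0 := by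
    rw [h1u]; exact div_ne_zero hz2m hz3m
  -- nonvanishing of factors
  have hXa : 1 + z/((m:ℂ)+α) = ((m:ℂ)+α+z)/((m:ℂ)+α) := by
    rw [add_div, div_self ha0]
  have hXa0 : 1 + z/((m:ℂ)+α) ≠ 0 := by
    rw [hXa]; exact div_ne_zero hz1m ha0
  have hXb : 1 + z/((m:ℂ)+β) = ((m:ℂ)+β+z)/((m:ℂ)+β) := by
    rw [add_div, div_self hb0]
  have hXb0 : 1 + z/((m:ℂ)+β) ≠ 0 := by
    rw [hXb]; exact div_ne_zero hz3m hb0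
  have hXc : 1 + z/((ζ m : ℂ)) = (((ζ m):ℂ)+z)/((ζ m : ℂ)) := by
    rw [add_div, div_self hc0]
  have hXc0 : 1 + z/((ζ m : ℂ)) ≠ 0 := by
    rw [hXc]; exact div_ne_zero hz2m hc0
  have hF0 : Ffac α ζ z m ≠ 0 := div_ne_zero hXa0 hXc0
  have hG0 : Gfac α β z m ≠ 0 := div_ne_zero hXa0 hXb0
  -- ratio identity
  have hratio : Ffac α ζ z m / Gfac α β z m
      = (1 + dd β ζ m / ((m:ℂ)+β)) / (1 + dd β ζ m / ((m:ℂ)+β+z)) := by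
    rw [Ffac, Gfac, div_div_div_comm, div_self hXa0, one_div_div]
    rw [frac_ratio hb0 hc0 hz3m hz2m, dd]
  -- exp equality
  have hexp : Complex.exp (Complex.log (Ffac α ζ z m) - Complex.log (Gfac α β z m))
      = Complex.exp (Complex.log (1 + dd β ζ m / ((m:ℂ)+β))
          - Complex.log (1 + dd β ζ m / ((m:ℂ)+β+z))) := by
    rw [Complex.exp_sub, Complex.exp_sub, Complex.exp_log hF0, Complex.exp_log hG0,
      Complex.exp_log h1w0, Complex.exp_log h1u0, hratio]
  -- F - 1, G - 1 bounds
  have hGsub : ‖Gfac α β z m - 1‖ ≤ CE * (((m:ℝ))⁻¹)^2 := by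
    have e : Gfac α β z m - 1 = z*(((m:ℂ)+β) - ((m:ℂ)+α))/(((m:ℂ)+α)*(((m:ℂ)+β)+z)) :=
      frac_sub_one ha0 hb0 hz3m
    have e2 : ((m:ℂ)+β) - ((m:ℂ)+α) = ((β - α : ℝ):ℂ) := by push_cast; ring
    rw [e, e2, div_eq_mul_inv, mul_inv, norm_mul, norm_mul, norm_mul, Complex.norm_real,
      Real.norm_eq_abs]
    calc ‖z‖ * |β - α| * (‖((m:ℂ)+α)⁻¹‖ * ‖(((m:ℂ)+β)+z)⁻¹‖)
        ≤ ‖z‖ * |β - α| * (((m:ℝ))⁻¹ * (2*((m:ℝ))⁻¹)) := by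
          apply mul_le_mul_of_nonneg_left _ (by positivity)
          exact mul_le_mul hainv hbzinv (norm_nonneg _) (by positivity)
      _ ≤ CE * (((m:ℝ))⁻¹)^2 := by
          rw [hCE]
          nlinarith [norm_nonneg z, abs_nonneg (β - α), sq_nonneg ((m:ℝ))⁻¹,
            mul_nonneg (mul_nonneg (norm_nonneg z) (by positivity : (0:ℝ) ≤ Cδ + 1))
              (sq_nonneg ((m:ℝ))⁻¹)]
  have hcz_low : (m:ℝ)/2 ≤ ‖((ζ m):ℂ) + z‖ := by
    have h1 : ‖((m:ℂ)+β)‖ ≤ ‖((ζ m):ℂ) + z‖ + ‖z‖ + ‖dd β ζ m‖ := by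
      calc ‖((m:ℂ)+β)‖ = ‖(((ζ m):ℂ) + z) - z - dd β ζ m‖ := by rw [dd]; ring_nf
        _ ≤ ‖(((ζ m):ℂ) + z) - z‖ + ‖dd β ζ m‖ := norm_sub_le _ _
        _ ≤ ‖((ζ m):ℂ) + z‖ + ‖z‖ + ‖dd β ζ m‖ := by
            linarith [norm_sub_le (((ζ m):ℂ) + z) z]
    rw [hbnorm] at h1
    have h2 : ‖dd β ζ m‖ ≤ 1/4 := by
      refine hδ.trans ?_; linarith
    linarith
  have hczinv : ‖(((ζ m):ℂ) + z)⁻¹‖ ≤ 2*((m:ℝ))⁻¹ := by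
    rw [norm_inv]
    have h2 : (0:ℝ) < (m:ℝ)/2 := by linarith
    calc ‖((ζ m):ℂ) + z‖⁻¹ ≤ ((m:ℝ)/2)⁻¹ := inv_anti₀ h2 hcz_low
      _ = 2*((m:ℝ))⁻¹ := by field_simp
  have hFsub : ‖Ffac α ζ z m - 1‖ ≤ CE * (((m:ℝ))⁻¹)^2 := by
    have e : Ffac α ζ z m - 1 = z*(((ζ m):ℂ) - ((m:ℂ)+α))/(((m:ℂ)+α)*(((ζ m):ℂ)+z)) :=
      frac_sub_one ha0 hc0 hz2m
    have e2 : ((ζ m):ℂ) - ((m:ℂ)+α) = dd β ζ m + ((β - α : ℝ):ℂ) := by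
      rw [dd]; push_cast; ring
    have e3 : ‖((ζ m):ℂ) - ((m:ℂ)+α)‖ ≤ Cδ + |β - α| := by
      rw [e2]
      calc ‖dd β ζ m + ((β - α : ℝ):ℂ)‖ ≤ ‖dd β ζ m‖ + ‖((β - α : ℝ):ℂ)‖ :=
            norm_add_le _ _
        _ = ‖dd β ζ m‖ + |β - α| := by rw [Complex.norm_real, Real.norm_eq_abs]
        _ ≤ Cδ + |β - α| := by
            have : ‖dd β ζ m‖ ≤ Cδ := by
              refine hδ.trans ?_; nlinarith
            linarith
    rw [e, div_eq_mul_inv, mul_inv, norm_mul, norm_mul, norm_mul]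
    calc ‖z‖ * ‖((ζ m):ℂ) - ((m:ℂ)+α)‖ * (‖((m:ℂ)+α)⁻¹‖ * ‖(((ζ m):ℂ)+z)⁻¹‖)
        ≤ ‖z‖ * (Cδ + |β - α|) * (((m:ℝ))⁻¹ * (2*((m:ℝ))⁻¹)) := by
          apply mul_le_mul
          · exact mul_le_mul_of_nonneg_left e3 (norm_nonneg _)
          · exact mul_le_mul hainv hczinv (norm_nonneg _) (by positivity)
          · positivity
          · positivity
      _ ≤ CE * (((m:ℝ))⁻¹)^2 := by
          rw [hCE]
          nlinarith [norm_nonneg z, abs_nonneg (β - α), sq_nonneg ((m:ℝ))⁻¹,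
            mul_nonneg (norm_nonneg z) (sq_nonneg ((m:ℝ))⁻¹)]
  -- smallness of F-1 and G-1
  have hCEt : CE * (((m:ℝ))⁻¹)^2 ≤ 1/2 := by
    have hCE0 : 0 ≤ CE := by rw [hCE]; positivity
    calc CE * (((m:ℝ))⁻¹)^2 ≤ CE * ((m:ℝ))⁻¹ := by nlinarith
      _ ≤ 1/2 := hsm2
  have hFsmall : ‖Ffac α ζ z m - 1‖ ≤ 1/2 := hFsub.trans hCEt
  have hGsmall : ‖Gfac α β z m - 1‖ ≤ 1/2 := hGsub.trans hCEt
  -- log norms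
  have hlogF : ‖Complex.log (Ffac α ζ z m)‖ ≤ (3/2) * ‖Ffac α ζ z m - 1‖ := by
    have e : Ffac α ζ z m = 1 + (Ffac α ζ z m - 1) := by ring
    have h := Complex.norm_log_one_add_half_le_self hFsmall
    rw [← e] at h
    exact h
  have hlogG : ‖Complex.log (Gfac α β z m)‖ ≤ (3/2) * ‖Gfac α β z m - 1‖ := by
    have e : Gfac α β z m = 1 + (Gfac α β z m - 1) := by ring
    have h := Complex.norm_log_one_add_half_le_self hGsmall
    rw [← e] at h
    exact h
  have hlogw : ‖Complex.log (1 + dd β ζ m / ((m:ℂ)+β))‖ ≤ (3/2) * ‖dd β ζ m / ((m:ℂ)+β)‖ :=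
    Complex.norm_log_one_add_half_le_self hw2
  have hlogu : ‖Complex.log (1 + dd β ζ m / ((m:ℂ)+β+z))‖ ≤ (3/2) * ‖dd β ζ m / ((m:ℂ)+β+z)‖ :=
    Complex.norm_log_one_add_half_le_self hu2
  -- the branch-free log identity
  have conclA : Complex.log (Ffac α ζ z m) - Complex.log (Gfac α β z m)
      = Complex.log (1 + dd β ζ m / ((m:ℂ)+β)) - Complex.log (1 + dd β ζ m / ((m:ℂ)+β+z)) := by
    apply aux_log_eq_of_exp_eq hexp
    · calc ‖Complex.log (Ffac α ζ z m) - Complex.log (Gfac α β z m)‖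
          ≤ ‖Complex.log (Ffac α ζ z m)‖ + ‖Complex.log (Gfac α β z m)‖ := norm_sub_le _ _
        _ ≤ 2 := by nlinarith
    · calc ‖Complex.log (1 + dd β ζ m / ((m:ℂ)+β)) - Complex.log (1 + dd β ζ m / ((m:ℂ)+β+z))‖
          ≤ ‖Complex.log (1 + dd β ζ m / ((m:ℂ)+β))‖
              + ‖Complex.log (1 + dd β ζ m / ((m:ℂ)+β+z))‖ := norm_sub_le _ _
        _ ≤ 2 := by nlinarith
  refine ⟨conclA, ?_, hFsub, hGsub⟩
  -- the eterm bound
  have hiden : eterm α β A₁ A₂ ζ z m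
      = (Complex.log (1 + dd β ζ m / ((m:ℂ)+β)) - dd β ζ m / ((m:ℂ)+β))
        - (Complex.log (1 + dd β ζ m / ((m:ℂ)+β+z)) - dd β ζ m / ((m:ℂ)+β+z))
        + rho β A₁ A₂ ζ m / ((m:ℂ)+β) - rho β A₁ A₂ ζ m / ((m:ℂ)+β+z) := by
    rw [eterm, conclA, rho]
    ring
  rw [hiden]
  have hb1 : ‖Complex.log (1 + dd β ζ m / ((m:ℂ)+β)) - dd β ζ m / ((m:ℂ)+β)‖
      ≤ Cδ^2 * (((m:ℝ))⁻¹)^4 := by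
    refine (aux_norm_log_sub hw2).trans ?_
    calc ‖dd β ζ m / ((m:ℂ)+β)‖^2 ≤ (Cδ * (((m:ℝ))⁻¹)^2)^2 :=
          pow_le_pow_left₀ (norm_nonneg _) hw 2
      _ = Cδ^2 * (((m:ℝ))⁻¹)^4 := by ring
  have hb2 : ‖Complex.log (1 + dd β ζ m / ((m:ℂ)+β+z)) - dd β ζ m / ((m:ℂ)+β+z)‖
      ≤ 4*Cδ^2 * (((m:ℝ))⁻¹)^4 := by
    refine (aux_norm_log_sub hu2).trans ?_
    calc ‖dd β ζ m / ((m:ℂ)+β+z)‖^2 ≤ (2*Cδ * (((m:ℝ))⁻¹)^2)^2 :=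
          pow_le_pow_left₀ (norm_nonneg _) hu 2
      _ = 4*Cδ^2 * (((m:ℝ))⁻¹)^4 := by ring
  have hb3 : ‖rho β A₁ A₂ ζ m / ((m:ℂ)+β)‖ ≤ C₃ * (((m:ℝ))⁻¹)^4 := by
    rw [div_eq_mul_inv, norm_mul]
    calc ‖rho β A₁ A₂ ζ m‖ * ‖((m:ℂ)+β)⁻¹‖ ≤ (C₃ * ((m:ℝ))⁻¹^3) * ((m:ℝ))⁻¹ :=
          mul_le_mul hρm hbinv (norm_nonneg _) (by positivity)
      _ = C₃ * (((m:ℝ))⁻¹)^4 := by ring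
  have hb4 : ‖rho β A₁ A₂ ζ m / ((m:ℂ)+β+z)‖ ≤ 2*C₃ * (((m:ℝ))⁻¹)^4 := by
    rw [div_eq_mul_inv, norm_mul]
    calc ‖rho β A₁ A₂ ζ m‖ * ‖((m:ℂ)+β+z)⁻¹‖ ≤ (C₃ * ((m:ℝ))⁻¹^3) * (2*((m:ℝ))⁻¹) :=
          mul_le_mul hρm hbzinv (norm_nonneg _) (by positivity)
      _ = 2*C₃ * (((m:ℝ))⁻¹)^4 := by ring
  calc ‖(Complex.log (1 + dd β ζ m / ((m:ℂ)+β)) - dd β ζ m / ((m:ℂ)+β))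
        - (Complex.log (1 + dd β ζ m / ((m:ℂ)+β+z)) - dd β ζ m / ((m:ℂ)+β+z))
        + rho β A₁ A₂ ζ m / ((m:ℂ)+β) - rho β A₁ A₂ ζ m / ((m:ℂ)+β+z)‖
      ≤ ‖(Complex.log (1 + dd β ζ m / ((m:ℂ)+β)) - dd β ζ m / ((m:ℂ)+β))
        - (Complex.log (1 + dd β ζ m / ((m:ℂ)+β+z)) - dd β ζ m / ((m:ℂ)+β+z))
        + rho β A₁ A₂ ζ m / ((m:ℂ)+β)‖ + ‖rho β A₁ A₂ ζ m / ((m:ℂ)+β+z)‖ := norm_sub_le _ _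
    _ ≤ ‖(Complex.log (1 + dd β ζ m / ((m:ℂ)+β)) - dd β ζ m / ((m:ℂ)+β))
        - (Complex.log (1 + dd β ζ m / ((m:ℂ)+β+z)) - dd β ζ m / ((m:ℂ)+β+z))‖
        + ‖rho β A₁ A₂ ζ m / ((m:ℂ)+β)‖ + ‖rho β A₁ A₂ ζ m / ((m:ℂ)+β+z)‖ := by
        linarith [norm_add_le ((Complex.log (1 + dd β ζ m / ((m:ℂ)+β)) - dd β ζ m / ((m:ℂ)+β))
          - (Complex.log (1 + dd β ζ m / ((m:ℂ)+β+z)) - dd β ζ m / ((m:ℂ)+β+z)))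
          (rho β A₁ A₂ ζ m / ((m:ℂ)+β))]
    _ ≤ ‖Complex.log (1 + dd β ζ m / ((m:ℂ)+β)) - dd β ζ m / ((m:ℂ)+β)‖
        + ‖Complex.log (1 + dd β ζ m / ((m:ℂ)+β+z)) - dd β ζ m / ((m:ℂ)+β+z)‖
        + ‖rho β A₁ A₂ ζ m / ((m:ℂ)+β)‖ + ‖rho β A₁ A₂ ζ m / ((m:ℂ)+β+z)‖ := by
        linarith [norm_sub_le (Complex.log (1 + dd β ζ m / ((m:ℂ)+β)) - dd β ζ m / ((m:ℂ)+β))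
          (Complex.log (1 + dd β ζ m / ((m:ℂ)+β+z)) - dd β ζ m / ((m:ℂ)+β+z))]
    _ ≤ (5*Cδ^2 + 3*C₃) * (((m:ℝ))⁻¹)^4 := by
        have := sq_nonneg ((m:ℝ))⁻¹
        nlinarith [hb1, hb2, hb3, hb4]


noncomputable def t11a (β : ℝ) (m : ℕ) : ℂ := ((m:ℂ)+β)⁻¹ * ((m:ℂ)+β)⁻¹
noncomputable def t11b (β : ℝ) (z : ℂ) (m : ℕ) : ℂ := ((m:ℂ)+β+z)⁻¹ * ((m:ℂ)+β)⁻¹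
noncomputable def t12a (β : ℝ) (m : ℕ) : ℂ := ((m:ℂ)+β)⁻¹ * (((m:ℂ)+β)^2)⁻¹
noncomputable def t12b (β : ℝ) (z : ℂ) (m : ℕ) : ℂ := ((m:ℂ)+β+z)⁻¹ * (((m:ℂ)+β)^2)⁻¹

lemma aux_zpow3 {N : ℕ} (hN : 1 ≤ N) : ‖((N:ℝ))^(-3:ℤ)‖ = (((N:ℝ))⁻¹)^3 := by
  have h0 : (0:ℝ) < (N:ℝ) := by exact_mod_cast Nat.pos_of_ne_zero (by omega)
  rw [Real.norm_eq_abs, _root_.abs_of_nonneg (zpow_nonneg (le_of_lt h0) _)]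
  rw [show ((-3):ℤ) = -((3:ℕ):ℤ) by norm_num, zpow_neg, zpow_natCast, inv_pow]

lemma aux_tbounds (β : ℝ) (hβ : 0 < β) (z : ℂ) (m : ℕ)
    (hm1 : 1 ≤ (m:ℝ)) (hzm : ‖z‖ + β + 1 ≤ (m:ℝ)/2) :
    ‖t11a β m‖ ≤ 2 * (((m:ℝ))⁻¹)^2 ∧ ‖t11b β z m‖ ≤ 2 * (((m:ℝ))⁻¹)^2
    ∧ ‖t12a β m‖ ≤ 2 * (((m:ℝ))⁻¹)^2 ∧ ‖t12b β z m‖ ≤ 2 * (((m:ℝ))⁻¹)^2 := by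
  have hm0 : (0:ℝ) < m := by linarith
  have hti : (0:ℝ) < ((m:ℝ))⁻¹ := by positivity
  have hti1 : ((m:ℝ))⁻¹ ≤ 1 := by rw [inv_le_one_iff₀]; right; exact hm1
  have hbcast : ((m:ℂ)+β) = (((m:ℝ)+β : ℝ) : ℂ) := by push_cast; ring
  have hbnorm : ‖((m:ℂ)+β)‖ = (m:ℝ)+β := by
    rw [hbcast, Complex.norm_real, Real.norm_eq_abs, abs_of_pos (by positivity)]
  have hbinv : ‖((m:ℂ)+β)⁻¹‖ ≤ ((m:ℝ))⁻¹ := by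
    rw [norm_inv, hbnorm]
    apply inv_anti₀ hm0
    linarith
  have hbznorm : (m:ℝ)/2 ≤ ‖(m:ℂ)+β+z‖ := by
    have h1 : ‖((m:ℂ)+β)‖ ≤ ‖(m:ℂ)+β+z‖ + ‖z‖ := by
      calc ‖((m:ℂ)+β)‖ = ‖((m:ℂ)+β+z) - z‖ := by ring_nf
      _ ≤ ‖(m:ℂ)+β+z‖ + ‖z‖ := norm_sub_le _ _
    rw [hbnorm] at h1
    linarith
  have hbzinv : ‖((m:ℂ)+β+z)⁻¹‖ ≤ 2*((m:ℝ))⁻¹ := by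
    rw [norm_inv]
    have h2 : (0:ℝ) < (m:ℝ)/2 := by linarith
    calc ‖(m:ℂ)+β+z‖⁻¹ ≤ ((m:ℝ)/2)⁻¹ := inv_anti₀ h2 hbznorm
    _ = 2*((m:ℝ))⁻¹ := by field_simp
  have hb2inv : ‖(((m:ℂ)+β)^2)⁻¹‖ ≤ (((m:ℝ))⁻¹)^2 := by
    rw [norm_inv, norm_pow, ← inv_pow]
    apply pow_le_pow_left₀ (by positivity) _ 2
    rw [← norm_inv]
    exact hbinv
  have hb2inv' : ‖(((m:ℂ)+β)^2)⁻¹‖ ≤ ((m:ℝ))⁻¹ := by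
    refine hb2inv.trans ?_
    exact pow_le_of_le_one (le_of_lt hti) hti1 (by norm_num)
  refine ⟨?_, ?_, ?_, ?_⟩
  · rw [t11a, norm_mul]
    calc ‖((m:ℂ)+β)⁻¹‖ * ‖((m:ℂ)+β)⁻¹‖ ≤ ((m:ℝ))⁻¹ * ((m:ℝ))⁻¹ :=
        mul_le_mul hbinv hbinv (norm_nonneg _) (by positivity)
      _ ≤ 2 * (((m:ℝ))⁻¹)^2 := by nlinarith
  · rw [t11b, norm_mul]
    calc ‖((m:ℂ)+β+z)⁻¹‖ * ‖((m:ℂ)+β)⁻¹‖ ≤ (2*((m:ℝ))⁻¹) * ((m:ℝ))⁻¹ :=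
        mul_le_mul hbzinv hbinv (norm_nonneg _) (by positivity)
      _ ≤ 2 * (((m:ℝ))⁻¹)^2 := by nlinarith
  · rw [t12a, norm_mul]
    calc ‖((m:ℂ)+β)⁻¹‖ * ‖(((m:ℂ)+β)^2)⁻¹‖ ≤ ((m:ℝ))⁻¹ * ((m:ℝ))⁻¹ :=
        mul_le_mul hbinv hb2inv' (norm_nonneg _) (by positivity)
      _ ≤ 2 * (((m:ℝ))⁻¹)^2 := by nlinarith
  · rw [t12b, norm_mul]
    calc ‖((m:ℂ)+β+z)⁻¹‖ * ‖(((m:ℂ)+β)^2)⁻¹‖ ≤ (2*((m:ℝ))⁻¹) * ((m:ℝ))⁻¹ :=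
        mul_le_mul hbzinv hb2inv' (norm_nonneg _) (by positivity)
      _ ≤ 2 * (((m:ℝ))⁻¹)^2 := by nlinarith

lemma aux_mul_inv_le {c r : ℝ} {m : ℕ} (hm : 0 < (m:ℝ)) (h : c ≤ r * (m:ℝ)) :
    c * ((m:ℝ))⁻¹ ≤ r := by
  have h1 : (0:ℝ) < ((m:ℝ))⁻¹ := by positivity
  have h2 : (m:ℝ) * ((m:ℝ))⁻¹ = 1 := mul_inv_cancel₀ (ne_of_gt hm)
  calc c * ((m:ℝ))⁻¹ ≤ r * (m:ℝ) * ((m:ℝ))⁻¹ :=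
        mul_le_mul_of_nonneg_right h (le_of_lt h1)
    _ = r := by rw [mul_assoc, h2, mul_one]


/-- `f_{1,1}(z₁,z₂;N) = ∑_{n≥N} (n+z₁)⁻¹ (n+z₂)⁻¹`. -/
noncomputable def f11 (z₁ z₂ : ℂ) (N : ℕ) : ℂ :=
  ∑' n : ℕ, (((N : ℂ) + n) + z₁)⁻¹ * (((N : ℂ) + n) + z₂)⁻¹

/-- `f_{1,2}(z₁,z₂;N) = ∑_{n≥N} (n+z₁)⁻¹ (n+z₂)⁻²`. -/
noncomputable def f12 (z₁ z₂ : ℂ) (N : ℕ) : ℂ :=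
  ∑' n : ℕ, (((N : ℂ) + n) + z₁)⁻¹ * ((((N : ℂ) + n) + z₂) ^ 2)⁻¹

set_option maxHeartbeats 2000000 in
/-- Convergence acceleration: if `ζ_n = n + β + A₁/(n+β) + A₂/(n+β)² + O(n⁻³)`, then
as `N → ∞` the tail product `∏_{n≥N} (1+z/(n+α))/(1+z/ζ_n)` equals
`Γ(N+α)Γ(N+β+z)/(Γ(N+β)Γ(N+α+z))` times
`exp[A₁(f₁₁(β,β;N) - f₁₁(z+β,β;N)) + A₂(f₁₂(β,β;N) - f₁₂(z+β,β;N)) + O(N⁻³)]`. -/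
theorem stmt17 (α β A₁ A₂ : ℝ) (hα : 0 < α) (hβ : 0 < β) (ζ : ℕ → ℝ)
    (hζ : (fun n : ℕ => ζ n - ((n : ℝ) + β) - A₁ / ((n : ℝ) + β) - A₂ / ((n : ℝ) + β) ^ 2)
        =O[atTop] (fun n : ℕ => (n : ℝ) ^ (-3 : ℤ)))
    (z : ℂ)
    (hz1 : ∀ n : ℕ, (n : ℂ) + α + z ≠ 0)
    (hz2 : ∀ n : ℕ, (ζ n : ℂ) + z ≠ 0)
    (hz3 : ∀ n : ℕ, (n : ℂ) + β + z ≠ 0)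
    (hζ0 : ∀ n : ℕ, ζ n ≠ 0) :
    ∃ E : ℕ → ℂ, E =O[atTop] (fun N : ℕ => ((N : ℝ) ^ (-3 : ℤ) : ℝ)) ∧
      ∀ᶠ N : ℕ in atTop,
        (∏' n : ℕ, (1 + z / (((N + n : ℕ) : ℂ) + α)) / (1 + z / ((ζ (N + n) : ℂ))))
          = Complex.Gamma ((N : ℂ) + α) * Complex.Gamma ((N : ℂ) + β + z)
              / (Complex.Gamma ((N : ℂ) + β) * Complex.Gamma ((N : ℂ) + α + z))
            * Complex.exp
              ((A₁ : ℂ) * (f11 (β : ℂ) (β : ℂ) N - f11 (z + β) (β : ℂ) N)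
                + (A₂ : ℂ) * (f12 (β : ℂ) (β : ℂ) N - f12 (z + β) (β : ℂ) N) + E N) := by
  classical
  obtain ⟨c, hc⟩ := Asymptotics.isBigO_iff.mp hζ
  set C₃ := |c| + 1 with hC₃def
  have hC₃0 : (0:ℝ) ≤ C₃ := by positivity
  clear_value C₃
  -- global nonvanishing of the factors
  have hαm : ∀ m : ℕ, ((m:ℂ)+α) ≠ 0 := by
    intro m
    have : ((m:ℂ)+α) = (((m:ℝ)+α : ℝ) : ℂ) := by push_cast; ring
    rw [this, Complex.ofReal_ne_zero]
    positivity
  have hβm : ∀ m : ℕ, ((m:ℂ)+β) ≠ 0 := by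
    intro m
    have : ((m:ℂ)+β) = (((m:ℝ)+β : ℝ) : ℂ) := by push_cast; ring
    rw [this, Complex.ofReal_ne_zero]
    positivity
  have hF0all : ∀ m : ℕ, Ffac α ζ z m ≠ 0 := by
    intro m
    apply div_ne_zero
    · rw [show (1 + z/((m:ℂ)+α)) = ((m:ℂ)+α+z)/((m:ℂ)+α) by rw [add_div, div_self (hαm m)]]
      exact div_ne_zero (hz1 m) (hαm m)
    · have hc0 : ((ζ m : ℂ)) ≠ 0 := Complex.ofReal_ne_zero.mpr (hζ0 m)
      rw [show (1 + z/((ζ m:ℂ))) = ((ζ m:ℂ)+z)/((ζ m:ℂ)) by rw [add_div, div_self hc0]]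
      exact div_ne_zero (hz2 m) hc0
  have hG0all : ∀ m : ℕ, Gfac α β z m ≠ 0 := by
    intro m
    apply div_ne_zero
    · rw [show (1 + z/((m:ℂ)+α)) = ((m:ℂ)+α+z)/((m:ℂ)+α) by rw [add_div, div_self (hαm m)]]
      exact div_ne_zero (hz1 m) (hαm m)
    · rw [show (1 + z/((m:ℂ)+β)) = ((m:ℂ)+β+z)/((m:ℂ)+β) by rw [add_div, div_self (hβm m)]]
      exact div_ne_zero (hz3 m) (hβm m)
  -- eventual facts
  have hev1 : ∀ᶠ m : ℕ in atTop, ‖rho β A₁ A₂ ζ m‖ ≤ C₃ * ((m:ℝ))⁻¹^3 := by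
    filter_upwards [hc, Filter.eventually_ge_atTop 1] with m hm hm1
    have hcast : rho β A₁ A₂ ζ m
        = ((ζ m - ((m:ℝ)+β) - A₁/((m:ℝ)+β) - A₂/((m:ℝ)+β)^2 : ℝ) : ℂ) := by
      rw [rho, dd]; push_cast; ring
    rw [hcast, Complex.norm_real]
    refine le_trans hm ?_
    rw [aux_zpow3 hm1]
    have h2 : (0:ℝ) ≤ (((m:ℝ))⁻¹)^3 := by positivity
    have h3 : c ≤ C₃ := by rw [hC₃def]; linarith [le_abs_self c]
    nlinarith
  have hev2 : ∀ᶠ m : ℕ in atTop, 2*(‖z‖+β+1) ≤ (m:ℝ) :=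
    tendsto_natCast_atTop_atTop.eventually_ge_atTop _
  have hev3 : ∀ᶠ m : ℕ in atTop, 4*(C₃+|A₁|+|A₂|) ≤ (m:ℝ) :=
    tendsto_natCast_atTop_atTop.eventually_ge_atTop _
  have hev4 : ∀ᶠ m : ℕ in atTop, 2*(2*‖z‖*((C₃+|A₁|+|A₂|)+|β-α|+1)) ≤ (m:ℝ) :=
    tendsto_natCast_atTop_atTop.eventually_ge_atTop _
  obtain ⟨M₀, hM₀⟩ := Filter.eventually_atTop.mp ((hev1.and hev2).and (hev3.and hev4))
  -- packaged per-index conclusions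
  have hper : ∀ m : ℕ, max M₀ 1 ≤ m →
      (Complex.log (Ffac α ζ z m) - Complex.log (Gfac α β z m)
          = Complex.log (1 + dd β ζ m / ((m:ℂ)+β)) - Complex.log (1 + dd β ζ m / ((m:ℂ)+β+z)))
      ∧ ‖eterm α β A₁ A₂ ζ z m‖ ≤ (5*(C₃ + |A₁| + |A₂|)^2 + 3*C₃) * (((m:ℝ))⁻¹)^4
      ∧ ‖Ffac α ζ z m - 1‖ ≤ (2*‖z‖*((C₃ + |A₁| + |A₂|) + |β - α| + 1)) * (((m:ℝ))⁻¹)^2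
      ∧ ‖Gfac α β z m - 1‖ ≤ (2*‖z‖*((C₃ + |A₁| + |A₂|) + |β - α| + 1)) * (((m:ℝ))⁻¹)^2 := by
    intro m hm
    have hm1n : 1 ≤ m := le_trans (le_max_right _ _) hm
    have hm1 : (1:ℝ) ≤ (m:ℝ) := by exact_mod_cast hm1n
    have hm0 : (0:ℝ) < (m:ℝ) := by linarith
    obtain ⟨⟨h1, h2⟩, h3, h4⟩ := hM₀ m (le_trans (le_max_left _ _) hm)
    refine aux_perm α β A₁ A₂ hβ hα ζ z C₃ hC₃0 m (hz1 m) (hz2 m) (hz3 m) (hζ0 m) hm1 ?_ h1 ?_ ?_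
    · linarith
    · exact aux_mul_inv_le hm0 (by linarith)
    · exact aux_mul_inv_le hm0 (by linarith)
  -- log norm bounds
  have hlogb : ∀ m : ℕ, max M₀ 1 ≤ m →
      ‖Complex.log (Ffac α ζ z m)‖
          ≤ (3/2*(2*‖z‖*((C₃+|A₁|+|A₂|)+|β-α|+1))) * (((m:ℝ))⁻¹)^2
      ∧ ‖Complex.log (Gfac α β z m)‖
          ≤ (3/2*(2*‖z‖*((C₃+|A₁|+|A₂|)+|β-α|+1))) * (((m:ℝ))⁻¹)^2 := by
    intro m hm
    have hm1n : 1 ≤ m := le_trans (le_max_right _ _) hm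
    have hm1 : (1:ℝ) ≤ (m:ℝ) := by exact_mod_cast hm1n
    have hm0 : (0:ℝ) < (m:ℝ) := by linarith
    have hti : (0:ℝ) < ((m:ℝ))⁻¹ := by positivity
    have hti1 : ((m:ℝ))⁻¹ ≤ 1 := by rw [inv_le_one_iff₀]; right; exact hm1
    have ht2 : (((m:ℝ))⁻¹)^2 ≤ ((m:ℝ))⁻¹ :=
      pow_le_of_le_one (le_of_lt hti) hti1 (by norm_num)
    obtain ⟨_, _, hF1, hG1⟩ := hper m hm
    obtain ⟨_, h4⟩ := (hM₀ m (le_trans (le_max_left _ _) hm)).2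
    have hCE0 : (0:ℝ) ≤ 2*‖z‖*((C₃+|A₁|+|A₂|)+|β-α|+1) := by positivity
    have hCEt : (2*‖z‖*((C₃+|A₁|+|A₂|)+|β-α|+1)) * (((m:ℝ))⁻¹)^2 ≤ 1/2 := by
      have := aux_mul_inv_le (c := 2*‖z‖*((C₃+|A₁|+|A₂|)+|β-α|+1)) (r := (1:ℝ)/2) hm0
        (by linarith)
      nlinarith
    have hFsmall : ‖Ffac α ζ z m - 1‖ ≤ 1/2 := hF1.trans hCEt
    have hGsmall : ‖Gfac α β z m - 1‖ ≤ 1/2 := hG1.trans hCEt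
    constructor
    · have e : Ffac α ζ z m = 1 + (Ffac α ζ z m - 1) := by ring
      rw [e]
      refine (Complex.norm_log_one_add_half_le_self hFsmall).trans ?_
      nlinarith [sq_nonneg ((m:ℝ))⁻¹]
    · have e : Gfac α β z m = 1 + (Gfac α β z m - 1) := by ring
      rw [e]
      refine (Complex.norm_log_one_add_half_le_self hGsmall).trans ?_
      nlinarith [sq_nonneg ((m:ℝ))⁻¹]
  refine ⟨fun N => ∑' n : ℕ, eterm α β A₁ A₂ ζ z (N+n), ?_, ?_⟩
  · -- the O(N⁻³) bound
    rw [Asymptotics.isBigO_iff]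
    refine ⟨40*(5*(C₃ + |A₁| + |A₂|)^2 + 3*C₃), ?_⟩
    filter_upwards [Filter.eventually_ge_atTop (max M₀ 1)] with N hN
    have hN1 : 1 ≤ N := le_trans (le_max_right M₀ 1) hN
    have hC₀0 : (0:ℝ) ≤ 5*(C₃ + |A₁| + |A₂|)^2 + 3*C₃ := by positivity
    have hbound : ∀ n : ℕ, ‖eterm α β A₁ A₂ ζ z (N+n)‖
        ≤ (40*(5*(C₃ + |A₁| + |A₂|)^2 + 3*C₃)) * (hfun (N+n) - hfun (N+n+1)) := by
      intro n
      have hm : max M₀ 1 ≤ N+n := le_trans hN (Nat.le_add_right _ _)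
      have hB := (hper (N+n) hm).2.1
      have h4 := aux_inv4_le (m := N+n) (le_trans (le_max_right M₀ 1) hm)
      calc ‖eterm α β A₁ A₂ ζ z (N+n)‖
          ≤ (5*(C₃ + |A₁| + |A₂|)^2 + 3*C₃) * ((((N+n:ℕ):ℝ))⁻¹)^4 := hB
        _ ≤ (5*(C₃ + |A₁| + |A₂|)^2 + 3*C₃) * (40 * (hfun (N+n) - hfun (N+n+1))) :=
            mul_le_mul_of_nonneg_left h4 hC₀0
        _ = (40*(5*(C₃ + |A₁| + |A₂|)^2 + 3*C₃)) * (hfun (N+n) - hfun (N+n+1)) := by ring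
    obtain ⟨hsumnorm, htsum⟩ := aux_tail_bound _ _ (by positivity) N hbound
    calc ‖∑' n : ℕ, eterm α β A₁ A₂ ζ z (N+n)‖
        ≤ ∑' n : ℕ, ‖eterm α β A₁ A₂ ζ z (N+n)‖ := norm_tsum_le_tsum_norm hsumnorm
      _ ≤ 40*(5*(C₃ + |A₁| + |A₂|)^2 + 3*C₃) * hfun N := htsum
      _ ≤ 40*(5*(C₃ + |A₁| + |A₂|)^2 + 3*C₃) * (((N:ℝ))⁻¹)^3 :=
          mul_le_mul_of_nonneg_left (hfun_le hN1) (by positivity)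
      _ = 40*(5*(C₃ + |A₁| + |A₂|)^2 + 3*C₃) * ‖((N:ℝ))^(-3:ℤ)‖ := by
          rw [aux_zpow3 hN1]
  · -- the eventual identity
    filter_upwards [Filter.eventually_ge_atTop (max M₀ 1)] with N hN
    have hN1 : 1 ≤ N := le_trans (le_max_right M₀ 1) hN
    have hmem : ∀ n : ℕ, max M₀ 1 ≤ N + n := fun n => le_trans hN (Nat.le_add_right N n)
    -- summability facts
    have hsumF : Summable (fun n : ℕ => Complex.log (Ffac α ζ z (N+n))) := by
      apply aux_summable_tail (fun m => Complex.log (Ffac α ζ z m)) (3/2*(2*‖z‖*((C₃+|A₁|+|A₂|)+|β-α|+1))) N hN1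
      intro n
      have := (hlogb (N+n) (hmem n)).1
      push_cast at this ⊢
      exact this
    have hsumG : Summable (fun n : ℕ => Complex.log (Gfac α β z (N+n))) := by
      apply aux_summable_tail (fun m => Complex.log (Gfac α β z m)) (3/2*(2*‖z‖*((C₃+|A₁|+|A₂|)+|β-α|+1))) N hN1
      intro n
      have := (hlogb (N+n) (hmem n)).2
      push_cast at this ⊢
      exact this
    have htb : ∀ n : ℕ, ‖t11a β (N+n)‖ ≤ 2 * ((((N+n:ℕ):ℝ))⁻¹)^2
        ∧ ‖t11b β z (N+n)‖ ≤ 2 * ((((N+n:ℕ):ℝ))⁻¹)^2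
        ∧ ‖t12a β (N+n)‖ ≤ 2 * ((((N+n:ℕ):ℝ))⁻¹)^2
        ∧ ‖t12b β z (N+n)‖ ≤ 2 * ((((N+n:ℕ):ℝ))⁻¹)^2 := by
      intro n
      have hm := hmem n
      have hm1n : 1 ≤ N+n := le_trans (le_max_right _ _) hm
      have hm1 : (1:ℝ) ≤ ((N+n:ℕ):ℝ) := by exact_mod_cast hm1n
      have h2 := ((hM₀ (N+n) (le_trans (le_max_left _ _) hm)).1).2
      exact aux_tbounds β hβ z (N+n) hm1 (by linarith)
    have hsum11a : Summable (fun n : ℕ => t11a β (N+n)) := by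
      apply aux_summable_tail (fun m => t11a β m) 2 N hN1
      intro n
      have := (htb n).1
      push_cast at this ⊢
      exact this
    have hsum11b : Summable (fun n : ℕ => t11b β z (N+n)) := by
      apply aux_summable_tail (fun m => t11b β z m) 2 N hN1
      intro n
      have := (htb n).2.1
      push_cast at this ⊢
      exact this
    have hsum12a : Summable (fun n : ℕ => t12a β (N+n)) := by
      apply aux_summable_tail (fun m => t12a β m) 2 N hN1
      intro n
      have := (htb n).2.2.1
      push_cast at this ⊢
      exact this
    have hsum12b : Summable (fun n : ℕ => t12b β z (N+n)) := by
      apply aux_summable_tail (fun m => t12b β z m) 2 N hN1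
      intro n
      have := (htb n).2.2.2
      push_cast at this ⊢
      exact this
    -- exp/tprod correspondences
    have hFexp : Complex.exp (∑' n : ℕ, Complex.log (Ffac α ζ z (N+n)))
        = ∏' n : ℕ, Ffac α ζ z (N+n) := by
      have := Complex.cexp_tsum_eq_tprod (f := fun (n : ℕ) => Ffac α ζ z (N+n))
        (fun n => hF0all (N+n)) hsumF
      exact this
    have hGexp : Complex.exp (∑' n : ℕ, Complex.log (Gfac α β z (N+n)))
        = ∏' n : ℕ, Gfac α β z (N+n) := by
      have := Complex.cexp_tsum_eq_tprod (f := fun (n : ℕ) => Gfac α β z (N+n))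
        (fun n => hG0all (N+n)) hsumG
      exact this
    have hGmul : Multipliable (fun n : ℕ => Gfac α β z (N+n)) :=
      Complex.multipliable_of_summable_log (f := fun (n : ℕ) => Gfac α β z (N+n))
        hsumG
    have hGamma : (∏' n : ℕ, Gfac α β z (N+n))
        = Complex.Gamma ((N:ℂ)+α) * Complex.Gamma ((N:ℂ)+β+z)
            / (Complex.Gamma ((N:ℂ)+β) * Complex.Gamma ((N:ℂ)+α+z)) :=
      aux_gamma_tail α β hα hβ z hz1 hz3 N hGmul
    -- tsum rearrangement
    have hE : (∑' n : ℕ, eterm α β A₁ A₂ ζ z (N+n))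
        = (∑' n : ℕ, Complex.log (Ffac α ζ z (N+n)))
            - (∑' n : ℕ, Complex.log (Gfac α β z (N+n)))
          - ((A₁:ℂ) * ((∑' n : ℕ, t11a β (N+n)) - (∑' n : ℕ, t11b β z (N+n)))
            + (A₂:ℂ) * ((∑' n : ℕ, t12a β (N+n)) - (∑' n : ℕ, t12b β z (N+n)))) := by
      have h1 : ∀ n : ℕ, eterm α β A₁ A₂ ζ z (N+n)
          = (Complex.log (Ffac α ζ z (N+n)) - Complex.log (Gfac α β z (N+n)))
            - ((A₁:ℂ) * (t11a β (N+n) - t11b β z (N+n))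
              + (A₂:ℂ) * (t12a β (N+n) - t12b β z (N+n))) := by
        intro n
        rw [eterm, t11a, t11b, t12a, t12b]
        ring
      rw [tsum_congr h1]
      rw [Summable.tsum_sub (hsumF.sub hsumG)
        (((hsum11a.sub hsum11b).mul_left _).add ((hsum12a.sub hsum12b).mul_left _))]
      rw [Summable.tsum_sub hsumF hsumG]
      rw [Summable.tsum_add ((hsum11a.sub hsum11b).mul_left _) ((hsum12a.sub hsum12b).mul_left _)]
      rw [tsum_mul_left, tsum_mul_left, Summable.tsum_sub hsum11a hsum11b, Summable.tsum_sub hsum12a hsum12b]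
    -- identify the f-series
    have hf11a : f11 (β:ℂ) (β:ℂ) N = ∑' n : ℕ, t11a β (N+n) := by
      apply tsum_congr
      intro n
      rw [t11a]
      push_cast
      ring_nf
    have hf11b : f11 (z+β) (β:ℂ) N = ∑' n : ℕ, t11b β z (N+n) := by
      apply tsum_congr
      intro n
      rw [t11b]
      push_cast
      ring_nf
    have hf12a : f12 (β:ℂ) (β:ℂ) N = ∑' n : ℕ, t12a β (N+n) := by
      apply tsum_congr
      intro n
      rw [t12a]
      push_cast
      ring_nf
    have hf12b : f12 (z+β) (β:ℂ) N = ∑' n : ℕ, t12b β z (N+n) := by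
      apply tsum_congr
      intro n
      rw [t12b]
      push_cast
      ring_nf
    have harg : (A₁:ℂ) * (f11 (β:ℂ) (β:ℂ) N - f11 (z+β) (β:ℂ) N)
        + (A₂:ℂ) * (f12 (β:ℂ) (β:ℂ) N - f12 (z+β) (β:ℂ) N)
        + (∑' n : ℕ, eterm α β A₁ A₂ ζ z (N+n))
        = (∑' n : ℕ, Complex.log (Ffac α ζ z (N+n)))
          - (∑' n : ℕ, Complex.log (Gfac α β z (N+n))) := by
      rw [hf11a, hf11b, hf12a, hf12b, hE]
      ring
    calc (∏' n : ℕ, (1 + z / (((N + n : ℕ) : ℂ) + α)) / (1 + z / ((ζ (N + n) : ℂ))))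
        = ∏' n : ℕ, Ffac α ζ z (N+n) := rfl
      _ = Complex.exp (∑' n : ℕ, Complex.log (Ffac α ζ z (N+n))) := hFexp.symm
      _ = Complex.exp ((∑' n : ℕ, Complex.log (Gfac α β z (N+n)))
            + ((A₁:ℂ) * (f11 (β:ℂ) (β:ℂ) N - f11 (z+β) (β:ℂ) N)
              + (A₂:ℂ) * (f12 (β:ℂ) (β:ℂ) N - f12 (z+β) (β:ℂ) N)
              + (∑' n : ℕ, eterm α β A₁ A₂ ζ z (N+n)))) := by
          congr 1
          rw [harg]
          ring
      _ = Complex.exp (∑' n : ℕ, Complex.log (Gfac α β z (N+n)))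
            * Complex.exp ((A₁:ℂ) * (f11 (β:ℂ) (β:ℂ) N - f11 (z+β) (β:ℂ) N)
              + (A₂:ℂ) * (f12 (β:ℂ) (β:ℂ) N - f12 (z+β) (β:ℂ) N)
              + (∑' n : ℕ, eterm α β A₁ A₂ ζ z (N+n))) := Complex.exp_add _ _
      _ = Complex.Gamma ((N:ℂ)+α) * Complex.Gamma ((N:ℂ)+β+z)
            / (Complex.Gamma ((N:ℂ)+β) * Complex.Gamma ((N:ℂ)+α+z))
            * Complex.exp ((A₁:ℂ) * (f11 (β:ℂ) (β:ℂ) N - f11 (z+β) (β:ℂ) N)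
              + (A₂:ℂ) * (f12 (β:ℂ) (β:ℂ) N - f12 (z+β) (β:ℂ) N)
              + (∑' n : ℕ, eterm α β A₁ A₂ ζ z (N+n))) := by
          rw [hGexp, hGamma]
end
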